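/- arXiv:2111.15553 — 10 statements merged into one kernel-verified Lean document; each statement's English description precedes it below -/
import Mathlib

section
/- A semimetric space (X,d) admits a triangle function that is continuous at (0,0) if and only if lim_{r→0} sup_{p∈X} diam B(p,r) = 0, where B(p,r) = {x : d(x,p) < r} and diam of a set is the supremum of distances between its points. -/
open Set Filter Topology ENNReal

namespace Semimetric

variable {X : Type*}

/-- Ball of radius `r` centered at `p`. -/
def Ball (d : X → X → ℝ) (p : X) (r : ℝ) : Set X := {x | d x p < r}

/-- A set is open iff each of its points is interior. -/
def IsOpenS (d : X → X → ℝ) (U : Set X) : Prop := ∀ p ∈ U, ∃ r > (0:ℝ), Ball d p r ⊆ U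

def IsClosedS (d : X → X → ℝ) (A : Set X) : Prop := IsOpenS d Aᶜ

/-- Compactness in the ball-generated topology. -/
def IsCompactS (d : X → X → ℝ) (H : Set X) : Prop :=
  ∀ C : Set (Set X), (∀ U ∈ C, IsOpenS d U) → H ⊆ ⋃₀ C →
    ∃ F ⊆ C, F.Finite ∧ H ⊆ ⋃₀ F

/-- Total boundedness: finite ε-nets exist for every ε > 0. -/
def TotBddS (d : X → X → ℝ) (H : Set X) : Prop :=
  ∀ ε > (0:ℝ), ∃ P : Finset X, H ⊆ ⋃ p ∈ P, Ball d p ε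

/-- Boundedness: finite diameter. -/
def BoundedS (d : X → X → ℝ) (A : Set X) : Prop := ∃ M : ℝ, ∀ x ∈ A, ∀ y ∈ A, d x y ≤ M

def IsCauchyS (d : X → X → ℝ) (x : ℕ → X) : Prop :=
  ∀ ε > (0:ℝ), ∃ N, ∀ m ≥ N, ∀ n ≥ N, d (x m) (x n) < ε

def ConvTo (d : X → X → ℝ) (x : ℕ → X) (p : X) : Prop :=
  Tendsto (fun n => d (x n) p) atTop (nhds 0)

def IsCompleteS (d : X → X → ℝ) : Prop :=
  ∀ x : ℕ → X, IsCauchyS d x → ∃ p, ConvTo d x p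

/-- Extended-real-valued triangle function for the semimetric `d`. -/
def IsTriangleFun (d : X → X → ℝ) (Φ : ℝ → ℝ → ℝ≥0∞) : Prop :=
  (∀ u v, Φ u v = Φ v u) ∧
  (∀ u₁ u₂ v, 0 ≤ u₁ → u₁ ≤ u₂ → 0 ≤ v → Φ u₁ v ≤ Φ u₂ v) ∧
  Φ 0 0 = 0 ∧
  ∀ x y z : X, ENNReal.ofReal (d x y) ≤ Φ (d x z) (d z y)

/-- Regularity: continuity at (0,0) (within the nonnegative quadrant). -/
def RegularAt00 (Φ : ℝ → ℝ → ℝ≥0∞) : Prop :=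
  ContinuousWithinAt (fun p : ℝ × ℝ => Φ p.1 p.2) (Set.Ici 0 ×ˢ Set.Ici 0) (0, 0)

/-- Real-valued triangle function for the semimetric `d`. -/
def IsTriangleFunR (d : X → X → ℝ) (Φ : ℝ → ℝ → ℝ) : Prop :=
  (∀ u v, Φ u v = Φ v u) ∧
  (∀ u₁ u₂ v, 0 ≤ u₁ → u₁ ≤ u₂ → 0 ≤ v → Φ u₁ v ≤ Φ u₂ v) ∧
  (∀ u v, 0 ≤ u → 0 ≤ v → 0 ≤ Φ u v) ∧
  Φ 0 0 = 0 ∧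
  ∀ x y z : X, d x y ≤ Φ (d x z) (d z y)

/-- The basic triangle function of `d`. -/
noncomputable def PhiBasic (d : X → X → ℝ) (u v : ℝ) : ℝ≥0∞ :=
  sSup {e | ∃ x y p : X, d p x ≤ u ∧ d p y ≤ v ∧ e = ENNReal.ofReal (d x y)}

/-- The Hausdorff–Pompeiu distance of two sets. -/
noncomputable def HD (d : X → X → ℝ) (A B : Set X) : ℝ≥0∞ :=
  sInf {ε : ℝ≥0∞ | 0 < ε ∧ (∀ a ∈ A, ∃ b ∈ B, ENNReal.ofReal (d a b) < ε) ∧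
    (∀ b ∈ B, ∃ a ∈ A, ENNReal.ofReal (d b a) < ε)}

/-- Comparison function: increasing on ℝ₊, nonnegative, iterates tend to 0. -/
def IsComparison (φ : ℝ → ℝ) : Prop :=
  (∀ t, 0 ≤ t → 0 ≤ φ t) ∧
  (∀ s t, 0 ≤ s → s ≤ t → φ s ≤ φ t) ∧
  ∀ t > (0:ℝ), Tendsto (fun n => φ^[n] t) atTop (nhds 0)

/-- φ-contraction. -/
def IsContraction (d : X → X → ℝ) (φ : ℝ → ℝ) (T : X → X) : Prop :=
  ∀ x y, d (T x) (T y) ≤ φ (d x y)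

/-- ψ(t) = sup { s ≥ 0 : s ≤ Φ(t, φ(s)) }. -/
noncomputable def Psi (Φ : ℝ → ℝ → ℝ≥0∞) (φ : ℝ → ℝ) (t : ℝ) : ℝ≥0∞ :=
  sSup {e | ∃ s : ℝ, 0 ≤ s ∧ ENNReal.ofReal s ≤ Φ t (φ s) ∧ e = ENNReal.ofReal s}

end Semimetric

open Semimetric
/-- Extended diameter of a set. -/
noncomputable def EDiam {X : Type*} (d : X → X → ℝ) (S : Set X) : ℝ≥0∞ :=
  ⨆ x ∈ S, ⨆ y ∈ S, ENNReal.ofReal (d x y)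

/-- regularity iff the sup of diameters of r-balls tends to 0 as r → 0. -/
theorem statement2 {X : Type*} [Nonempty X] (d : X → X → ℝ)
    (hpos : ∀ x y, 0 ≤ d x y) (hsymm : ∀ x y, d x y = d y x)
    (hzero : ∀ x y, d x y = 0 ↔ x = y) :
    (∃ Φ : ℝ → ℝ → ℝ≥0∞, IsTriangleFun d Φ ∧ RegularAt00 Φ) ↔
      Tendsto (fun r : ℝ => ⨆ p : X, EDiam d (Ball d p r))
        (nhdsWithin 0 (Set.Ioi 0)) (nhds 0) := by
  constructor
  · rintro ⟨Φ, ⟨hs, hm, h00, htri⟩, hreg⟩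
    have hΦtend : Tendsto (fun r : ℝ => Φ r r) (nhdsWithin 0 (Set.Ioi 0)) (nhds 0) := by
      have h1 : Tendsto (fun r : ℝ => ((r, r) : ℝ × ℝ)) (nhdsWithin 0 (Set.Ioi 0))
          (nhdsWithin (0, 0) (Set.Ici 0 ×ˢ Set.Ici 0)) := by
        rw [tendsto_nhdsWithin_iff]
        constructor
        · exact (Continuous.tendsto (by continuity) 0).mono_left nhdsWithin_le_nhds
        · filter_upwards [self_mem_nhdsWithin] with r hr
          exact ⟨Set.mem_Ici.mpr (le_of_lt (Set.mem_Ioi.mp hr)), Set.mem_Ici.mpr (le_of_lt (Set.mem_Ioi.mp hr))⟩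
      have := hreg.tendsto.comp h1
      simpa [h00, Function.comp_def] using this
    rw [ENNReal.tendsto_nhds_zero] at hΦtend ⊢
    intro ε hε
    filter_upwards [hΦtend ε hε, self_mem_nhdsWithin] with r hr hrpos
    refine le_trans ?_ hr
    refine iSup_le fun p => ?_
    unfold EDiam
    refine iSup₂_le fun x hx => iSup₂_le fun y hy => ?_
    have hx' : d x p < r := hx
    have hy' : d y p < r := hy
    calc ENNReal.ofReal (d x y) ≤ Φ (d x p) (d p y) := htri x y p
      _ ≤ Φ r (d p y) := hm _ _ _ (hpos x p) hx'.le (hpos p y)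
      _ = Φ (d p y) r := hs _ _
      _ ≤ Φ r r := hm _ _ _ (hpos p y) (by rw [hsymm]; exact hy'.le) (le_of_lt hrpos)
  · intro htend
    have hΦ00 : PhiBasic d (0 : ℝ) (0 : ℝ) = 0 := by
      refine le_antisymm (sSup_le ?_) (zero_le)
      rintro e ⟨x, y, p, h1, h2, rfl⟩
      have hx : x = p := ((hzero p x).1 (le_antisymm h1 (hpos p x))).symm
      have hy : y = p := ((hzero p y).1 (le_antisymm h2 (hpos p y))).symm
      have : d x y = 0 := by rw [hx, hy, (hzero p p).2 rfl]
      simp [this]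
    have hball : ∀ u v r : ℝ, u < r → v < r →
        PhiBasic d u v ≤ ⨆ p : X, EDiam d (Ball d p r) := by
      intro u v r hu hv
      refine sSup_le ?_
      rintro e ⟨x, y, p, h1, h2, rfl⟩
      have hx : x ∈ Ball d p r := by
        show d x p < r; rw [hsymm]; exact h1.trans_lt hu
      have hy : y ∈ Ball d p r := by
        show d y p < r; rw [hsymm]; exact h2.trans_lt hv
      refine le_iSup_of_le p ?_
      unfold EDiam
      exact le_iSup₂_of_le x hx (le_iSup₂_of_le y hy le_rfl)
    refine ⟨PhiBasic d, ⟨?_, ?_, hΦ00, ?_⟩, ?_⟩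
    · intro u v
      unfold PhiBasic
      congr 1
      ext e
      constructor
      · rintro ⟨x, y, p, h1, h2, rfl⟩
        exact ⟨y, x, p, h2, h1, by rw [hsymm]⟩
      · rintro ⟨x, y, p, h1, h2, rfl⟩
        exact ⟨y, x, p, h2, h1, by rw [hsymm]⟩
    · intro u₁ u₂ v _ h12 _
      apply sSup_le_sSup
      rintro e ⟨x, y, p, h1, h2, rfl⟩
      exact ⟨x, y, p, h1.trans h12, h2, rfl⟩
    · intro x y z
      exact le_sSup ⟨x, y, z, (hsymm z x).le, le_rfl, rfl⟩
    · unfold RegularAt00 ContinuousWithinAt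
      rw [show (fun p : ℝ × ℝ => PhiBasic d p.1 p.2) (0, 0) = 0 from hΦ00]
      rw [ENNReal.tendsto_nhds_zero] at htend ⊢
      intro ε hε
      obtain ⟨r, hr, hrpos⟩ := ((htend ε hε).and self_mem_nhdsWithin).exists
      have hnhds : {q : ℝ × ℝ | q.1 < r ∧ q.2 < r} ∈ nhds ((0 : ℝ), (0 : ℝ)) := by
        have : IsOpen {q : ℝ × ℝ | q.1 < r ∧ q.2 < r} :=
          (isOpen_lt continuous_fst continuous_const).inter
            (isOpen_lt continuous_snd continuous_const)
        exact this.mem_nhds ⟨hrpos, hrpos⟩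
      filter_upwards [nhdsWithin_le_nhds hnhds] with q hq
      exact (hball q.1 q.2 r hq.1 hq.2).trans hr
end

section
/- In a regular semimetric space, for every ε > 0 there exists r > 0 such that for all x ∈ X, B(x,r) is contained in the interior of B(x,ε); consequently the topology of the semimetric space is Hausdorff. -/
open Set Filter Topology ENNReal

open Semimetric

private lemma key_small {Φ : ℝ → ℝ → ℝ≥0∞} (hreg : RegularAt00 Φ) (h00 : Φ 0 0 = 0) :
    ∀ ε > (0:ℝ), ∃ δ > (0:ℝ), ∀ u v : ℝ, 0 ≤ u → u < δ → 0 ≤ v → v < δ →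
      Φ u v < ENNReal.ofReal ε := by
  intro ε hε
  have h0 : (0:ℝ≥0∞) < ENNReal.ofReal ε := ENNReal.ofReal_pos.mpr hε
  have ht : Tendsto (fun p : ℝ × ℝ => Φ p.1 p.2)
      (nhdsWithin (0,0) (Set.Ici 0 ×ˢ Set.Ici 0)) (nhds 0) := by
    have := hreg
    unfold RegularAt00 ContinuousWithinAt at this
    simpa [h00] using this
  have hev : ∀ᶠ p in nhdsWithin ((0:ℝ),(0:ℝ)) (Set.Ici 0 ×ˢ Set.Ici 0),
      Φ p.1 p.2 < ENNReal.ofReal ε := ht (Iio_mem_nhds h0)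
  rw [eventually_nhdsWithin_iff, Metric.eventually_nhds_iff] at hev
  obtain ⟨δ, hδ, h⟩ := hev
  refine ⟨δ, hδ, fun u v hu huδ hv hvδ => ?_⟩
  have hd : dist (u, v) ((0:ℝ), (0:ℝ)) < δ := by
    rw [Prod.dist_eq]
    simp only [Real.dist_eq, sub_zero]
    rw [abs_of_nonneg hu, abs_of_nonneg hv]
    exact max_lt huδ hvδ
  exact h hd ⟨hu, hv⟩

theorem statement5_aux {X : Type*} (d : X → X → ℝ)
    (hpos : ∀ x y, 0 ≤ d x y)
    (Φ : ℝ → ℝ → ℝ≥0∞) (hΦ : IsTriangleFun d Φ) (hreg : RegularAt00 Φ) :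
    ∀ ε > (0:ℝ), ∃ δ > (0:ℝ), ∀ x y : X, d y x < δ → Ball d y δ ⊆ Ball d x ε := by
  intro ε hε
  obtain ⟨δ, hδ, hkey⟩ := key_small hreg hΦ.2.2.1 ε hε
  refine ⟨δ, hδ, fun x y hyx z hz => ?_⟩
  have h1 : ENNReal.ofReal (d z x) ≤ Φ (d z y) (d y x) := hΦ.2.2.2 z x y
  have h2 : Φ (d z y) (d y x) < ENNReal.ofReal ε :=
    hkey _ _ (hpos z y) hz (hpos y x) hyx
  have := lt_of_le_of_lt h1 h2
  exact (ENNReal.ofReal_lt_ofReal_iff hε).mp this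

/-- uniform interiority of balls and Hausdorff separation. -/
theorem statement5 {X : Type*} (d : X → X → ℝ)
    (hpos : ∀ x y, 0 ≤ d x y) (hsymm : ∀ x y, d x y = d y x)
    (hzero : ∀ x y, d x y = 0 ↔ x = y)
    (Φ : ℝ → ℝ → ℝ≥0∞) (hΦ : IsTriangleFun d Φ) (hreg : RegularAt00 Φ) :
    (∀ ε > (0:ℝ), ∃ r > (0:ℝ), ∀ x : X,
        Ball d x r ⊆ {y : X | ∃ ρ > (0:ℝ), Ball d y ρ ⊆ Ball d x ε}) ∧
    (∀ a b : X, a ≠ b → ∃ U V : Set X,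
        IsOpenS d U ∧ IsOpenS d V ∧ a ∈ U ∧ b ∈ V ∧ Disjoint U V) := by
  have haux := statement5_aux d hpos Φ hΦ hreg
  have hopen : ∀ (x : X) (ε : ℝ), 0 < ε →
      IsOpenS d {y : X | ∃ ρ > (0:ℝ), Ball d y ρ ⊆ Ball d x ε} := by
    intro x ε hε y hy
    obtain ⟨ρ, hρ, hsub⟩ := hy
    obtain ⟨δ, hδ, hδsub⟩ := haux ρ hρ
    refine ⟨δ, hδ, fun z hz => ?_⟩
    exact ⟨δ, hδ, fun w hw => hsub (hδsub y z hz hw)⟩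
  constructor
  · intro ε hε
    obtain ⟨δ, hδ, hδsub⟩ := haux ε hε
    exact ⟨δ, hδ, fun x y hy => ⟨δ, hδ, hδsub x y hy⟩⟩
  · intro a b hab
    have hdab : 0 < d a b := lt_of_le_of_ne (hpos a b) (fun h => hab ((hzero a b).mp h.symm))
    obtain ⟨δ, hδ, hkey⟩ := key_small hreg hΦ.2.2.1 (d a b) hdab
    refine ⟨{y : X | ∃ ρ > (0:ℝ), Ball d y ρ ⊆ Ball d a δ},
      {y : X | ∃ ρ > (0:ℝ), Ball d y ρ ⊆ Ball d b δ},
      hopen a δ hδ, hopen b δ hδ, ⟨δ, hδ, fun z hz => hz⟩, ⟨δ, hδ, fun z hz => hz⟩, ?_⟩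
    rw [Set.disjoint_left]
    rintro y ⟨ρ, hρ, hsub⟩ ⟨ρ', hρ', hsub'⟩
    have hya : y ∈ Ball d a δ := hsub (by simpa [Ball, (hzero y y).mpr rfl] using hρ)
    have hyb : y ∈ Ball d b δ := hsub' (by simpa [Ball, (hzero y y).mpr rfl] using hρ')
    have h1 : ENNReal.ofReal (d a b) ≤ Φ (d a y) (d y b) := hΦ.2.2.2 a b y
    have h2 : Φ (d a y) (d y b) < ENNReal.ofReal (d a b) := by
      apply hkey _ _ (hpos a y) _ (hpos y b) hyb
      rw [hsymm]; exact hya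
    exact absurd (lt_of_le_of_lt h1 h2) (lt_irrefl _)
end

section
/- In a complete regular semimetric space, a subset is compact if and only if it is closed and totally bounded (Hausdorff's theorem for semimetric spaces). -/
open Set Filter Topology ENNReal

open Semimetric

namespace SMAux

open Semimetric

variable {X : Type*}

/-- Uniform triangle property. -/
def UTProp (d : X → X → ℝ) : Prop :=
  ∀ ε > (0:ℝ), ∃ δ > (0:ℝ), δ ≤ ε ∧ ∀ x y z : X, d x z < δ → d z y < δ → d x y < ε

lemma ut_of_reg {d : X → X → ℝ} (hpos : ∀ x y, 0 ≤ d x y) {Φ : ℝ → ℝ → ℝ≥0∞}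
    (hΦ : IsTriangleFun d Φ) (hreg : RegularAt00 Φ) : UTProp d := by
  intro ε hε
  have h0 : Φ 0 0 = 0 := hΦ.2.2.1
  have htend : Tendsto (fun p : ℝ × ℝ => Φ p.1 p.2)
      (𝓝[Set.Ici 0 ×ˢ Set.Ici 0] ((0:ℝ), (0:ℝ))) (𝓝 0) := by
    have h := hreg
    unfold RegularAt00 ContinuousWithinAt at h
    simpa [h0] using h
  have hev : {p : ℝ × ℝ | Φ p.1 p.2 < ENNReal.ofReal ε} ∈
      𝓝[Set.Ici 0 ×ˢ Set.Ici 0] ((0:ℝ), (0:ℝ)) :=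
    htend.eventually_lt_const (by simpa using ENNReal.ofReal_pos.2 hε)
  rw [Metric.mem_nhdsWithin_iff] at hev
  obtain ⟨δ', hδ', hsub⟩ := hev
  refine ⟨min δ' ε, lt_min hδ' hε, min_le_right _ _, ?_⟩
  intro x y z h1 h2
  have hmem : ((d x z, d z y) : ℝ × ℝ) ∈ Metric.ball ((0:ℝ),(0:ℝ)) δ' ∩ (Set.Ici 0 ×ˢ Set.Ici 0) := by
    constructor
    · rw [Metric.mem_ball, Prod.dist_eq]
      simp only [Real.dist_eq, sub_zero]
      rw [abs_of_nonneg (hpos x z), abs_of_nonneg (hpos z y)]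
      exact max_lt (lt_of_lt_of_le h1 (min_le_left _ _)) (lt_of_lt_of_le h2 (min_le_left _ _))
    · exact ⟨hpos x z, hpos z y⟩
  have hΦlt : Φ (d x z) (d z y) < ENNReal.ofReal ε := hsub hmem
  have hle := lt_of_le_of_lt (hΦ.2.2.2 x y z) hΦlt
  exact (ENNReal.ofReal_lt_ofReal_iff hε).1 hle

/-- Interior. -/
def IntS (d : X → X → ℝ) (S : Set X) : Set X := {y | ∃ r > (0:ℝ), Ball d y r ⊆ S}

lemma intS_subset {d : X → X → ℝ} (hzero : ∀ x y, d x y = 0 ↔ x = y) (S : Set X) :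
    IntS d S ⊆ S := by
  rintro y ⟨r, hr, hb⟩
  exact hb (by simp [Ball, (hzero y y).2 rfl, hr])

lemma isOpen_intS {d : X → X → ℝ} (hut : UTProp d) (S : Set X) :
    IsOpenS d (IntS d S) := by
  rintro p ⟨r, hr, hb⟩
  obtain ⟨δ, hδ, _, htri⟩ := hut r hr
  refine ⟨δ, hδ, fun y hy => ⟨δ, hδ, fun z hz => hb (htri z p y hz hy)⟩⟩

end SMAux

open SMAux
/-- Hausdorff's theorem in complete regular semimetric spaces. -/
theorem statement9 {X : Type*} (d : X → X → ℝ)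
    (hpos : ∀ x y, 0 ≤ d x y) (hsymm : ∀ x y, d x y = d y x)
    (hzero : ∀ x y, d x y = 0 ↔ x = y)
    (hcomplete : IsCompleteS d)
    (Φ : ℝ → ℝ → ℝ≥0∞) (hΦ : IsTriangleFun d Φ) (hreg : RegularAt00 Φ)
    (H : Set X) :
    IsCompactS d H ↔ IsClosedS d H ∧ TotBddS d H := by
  classical
  have hut : UTProp d := ut_of_reg hpos hΦ hreg
  constructor
  · -- compact → closed ∧ totally bounded
    intro hcpt
    constructor
    · -- closed
      intro p hp
      have hdx : ∀ x ∈ H, 0 < d x p := by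
        intro x hx
        rcases (hpos x p).lt_or_eq with h | h
        · exact h
        · exact absurd ((hzero x p).1 h.symm ▸ hx) hp
      choose! δx hδpos hδle hδtri using fun x (hx : x ∈ H) => hut (d x p) (hdx x hx)
      set C : Set (Set X) := (fun x => IntS d (Ball d x (δx x))) '' H with hCdef
      have hopen : ∀ U ∈ C, IsOpenS d U := by
        rintro U ⟨x, -, rfl⟩; exact isOpen_intS hut _
      have hcov : H ⊆ ⋃₀ C := by
        intro x hx
        exact ⟨IntS d (Ball d x (δx x)), ⟨x, hx, rfl⟩, ⟨δx x, hδpos x hx, subset_rfl⟩⟩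
      obtain ⟨F, hFC, hFfin, hFcov⟩ := hcpt C hopen hcov
      rcases F.eq_empty_or_nonempty with rfl | ⟨U₀, hU₀⟩
      · refine ⟨1, one_pos, fun y hy hyH => ?_⟩
        simpa using hFcov hyH
      · obtain ⟨x₀, hx₀H, -⟩ := hFC hU₀
        haveI : Nonempty X := ⟨x₀⟩
        have hc : ∀ U ∈ F, ∃ x, x ∈ H ∧ U ⊆ Ball d x (δx x) := by
          intro U hU
          obtain ⟨x, hxH, rfl⟩ := hFC hU
          exact ⟨x, hxH, intS_subset hzero _⟩
        choose! c hcH hcsub using hc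
        set Fs := hFfin.toFinset with hFs
        have hFsne : Fs.Nonempty := ⟨U₀, hFfin.mem_toFinset.2 hU₀⟩
        set Rs : Finset ℝ := Fs.image (fun U => δx (c U)) with hRs
        have hRsne : Rs.Nonempty := hFsne.image _
        set r := Rs.min' hRsne with hrdef
        have hrpos : 0 < r := by
          obtain ⟨U, hU, hUr⟩ := Finset.mem_image.1 (Rs.min'_mem hRsne)
          have hUF : U ∈ F := hFfin.mem_toFinset.1 hU
          rw [hrdef, ← hUr]
          exact hδpos _ (hcH U hUF)
        refine ⟨r, hrpos, fun y hy hyH => ?_⟩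
        obtain ⟨U, hUF, hyU⟩ := hFcov hyH
        have hxH := hcH U hUF
        have h1 : d y (c U) < δx (c U) := hcsub U hUF hyU
        have h2 : d y p < δx (c U) := by
          refine lt_of_lt_of_le hy ?_
          exact Rs.min'_le _ (Finset.mem_image.2 ⟨U, hFfin.mem_toFinset.2 hUF, rfl⟩)
        have := hδtri (c U) hxH (c U) p y (by rwa [hsymm]) h2
        exact absurd this (lt_irrefl _)
    · -- totally bounded
      intro ε hε
      rcases isEmpty_or_nonempty X with hX | hX
      · exact ⟨∅, fun x hx => (hX.false x).elim⟩
      set C : Set (Set X) := (fun x => IntS d (Ball d x ε)) '' H with hCdef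
      have hopen : ∀ U ∈ C, IsOpenS d U := by
        rintro U ⟨x, -, rfl⟩; exact isOpen_intS hut _
      have hcov : H ⊆ ⋃₀ C := by
        intro x hx
        exact ⟨IntS d (Ball d x ε), ⟨x, hx, rfl⟩, ⟨ε, hε, subset_rfl⟩⟩
      obtain ⟨F, hFC, hFfin, hFcov⟩ := hcpt C hopen hcov
      have hc : ∀ U ∈ F, ∃ x : X, U ⊆ Ball d x ε := by
        intro U hU
        obtain ⟨x, -, rfl⟩ := hFC hU
        exact ⟨x, intS_subset hzero _⟩
      choose! c hcsub using hc
      refine ⟨hFfin.toFinset.image c, fun x hx => ?_⟩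
      obtain ⟨U, hUF, hxU⟩ := hFcov hx
      exact Set.mem_biUnion (Finset.mem_image.2 ⟨U, hFfin.mem_toFinset.2 hUF, rfl⟩)
        (hcsub U hUF hxU)
  · -- closed ∧ totally bounded → compact
    rintro ⟨hcl, htb⟩
    intro C hC hcover
    by_contra hbad
    set bad : Set X → Prop := fun S => ¬ ∃ F ⊆ C, F.Finite ∧ S ⊆ ⋃₀ F with hbaddef
    have hbadH : bad H := hbad
    have step : ∀ S : Set X, S ⊆ H → bad S → ∀ δ > (0:ℝ), ∃ q : X, bad (S ∩ Ball d q δ) := by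
      intro S hSH hS δ hδ
      by_contra hno
      push_neg at hno
      simp only [hbaddef, not_not] at hno
      obtain ⟨P, hP⟩ := htb δ hδ
      choose F hF using hno
      have hFC : ∀ q, F q ⊆ C := fun q => (hF q).1
      have hFfin : ∀ q, (F q).Finite := fun q => (hF q).2.1
      have hFcov : ∀ q, S ∩ Ball d q δ ⊆ ⋃₀ (F q) := fun q => (hF q).2.2
      apply hS
      refine ⟨⋃ p ∈ (P : Set X), F p, ?_, ?_, ?_⟩
      · exact Set.iUnion₂_subset fun p _ => hFC p
      · exact Set.Finite.biUnion P.finite_toSet (fun p _ => hFfin p)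
      · intro x hx
        obtain ⟨p, hpP, hxp⟩ := Set.mem_iUnion₂.1 (hP (hSH hx))
        obtain ⟨U, hU, hxU⟩ := hFcov p ⟨hx, hxp⟩
        exact ⟨U, Set.mem_iUnion₂.2 ⟨p, hpP, hU⟩, hxU⟩
    have badne : ∀ S : Set X, bad S → S.Nonempty := by
      intro S hS
      rcases S.eq_empty_or_nonempty with rfl | h
      · exact absurd ⟨∅, empty_subset _, finite_empty, by simp⟩ hS
      · exact h
    choose εs hεpos hεle hεtri using fun n : ℕ => hut (1/((n:ℝ)+1)) (by positivity)
    -- construct the nested sequence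
    let T : ℕ → {S : Set X // bad S ∧ S ⊆ H} := fun n => Nat.rec
      ⟨H, hbadH, subset_rfl⟩
      (fun n p => ⟨p.1 ∩ Ball d (Classical.choose (step p.1 p.2.2 p.2.1 (εs n) (hεpos n))) (εs n),
        Classical.choose_spec (step p.1 p.2.2 p.2.1 (εs n) (hεpos n)),
        Set.inter_subset_left.trans p.2.2⟩) n
    let q : ℕ → X := fun n => Classical.choose (step (T n).1 (T n).2.2 (T n).2.1 (εs n) (hεpos n))
    have hTsucc : ∀ n, (T (n+1)).1 = (T n).1 ∩ Ball d (q n) (εs n) := fun n => rfl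
    have hTmono : ∀ m n, m ≤ n → (T n).1 ⊆ (T m).1 := by
      intro m n h
      induction n, h using Nat.le_induction with
      | base => exact subset_rfl
      | succ n hmn ih => rw [hTsucc n]; exact Set.inter_subset_left.trans ih
    choose x hx using fun n => badne _ (T (n+1)).2.1
    have hxball : ∀ n m, n ≤ m → d (x m) (q n) < εs n := by
      intro n m h
      have : x m ∈ (T (n+1)).1 := hTmono (n+1) (m+1) (Nat.succ_le_succ h) (hx m)
      rw [hTsucc n] at this
      exact this.2
    have hxH : ∀ n, x n ∈ H := fun n => (T (n+1)).2.2 (hx n)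
    have hcauchy : IsCauchyS d x := by
      intro ε hε
      obtain ⟨N, hN⟩ := exists_nat_one_div_lt hε
      refine ⟨N, fun m hm n hn => ?_⟩
      have h1 : d (x m) (q N) < εs N := hxball N m hm
      have h2 : d (q N) (x n) < εs N := by rw [hsymm]; exact hxball N n hn
      exact lt_trans (hεtri N (x m) (x n) (q N) h1 h2) hN
    obtain ⟨p, hp⟩ := hcomplete x hcauchy
    have hpH : p ∈ H := by
      by_contra hpn
      obtain ⟨r, hr, hball⟩ := hcl p hpn
      obtain ⟨n, hn⟩ := (hp.eventually (gt_mem_nhds hr)).exists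
      exact hball hn (hxH n)
    obtain ⟨U, hUC, hpU⟩ := hcover hpH
    obtain ⟨r, hr, hbU⟩ := hC U hUC p hpU
    obtain ⟨δ₁, hδ₁, hδ₁le, htri₁⟩ := hut r hr
    obtain ⟨δ₂, hδ₂, hδ₂le, htri₂⟩ := hut δ₁ hδ₁
    have hev1 : ∀ᶠ n : ℕ in atTop, 1/((n:ℝ)+1) < δ₂ :=
      tendsto_one_div_add_atTop_nhds_zero_nat.eventually (gt_mem_nhds hδ₂)
    have hev2 : ∀ᶠ n : ℕ in atTop, d (x n) p < δ₂ := hp.eventually (gt_mem_nhds hδ₂)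
    obtain ⟨n, hn1, hn2⟩ := (hev1.and hev2).exists
    have hεlt : εs n < δ₂ := lt_of_le_of_lt (hεle n) hn1
    have hqp : d (q n) p < δ₁ := by
      refine htri₂ (q n) p (x n) ?_ hn2
      rw [hsymm]
      exact lt_trans (hxball n n le_rfl) hεlt
    have hsubU : (T (n+1)).1 ⊆ U := by
      intro y hy
      rw [hTsucc n] at hy
      have h1 : d y (q n) < δ₁ := lt_of_lt_of_le (lt_trans hy.2 hεlt) hδ₂le
      exact hbU (htri₁ y p (q n) h1 hqp)
    exact (T (n+1)).2.1 ⟨{U}, Set.singleton_subset_iff.2 hUC, Set.finite_singleton U,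
      by rwa [Set.sUnion_singleton]⟩
end

section
/- If (X,d) is a semimetric space with a real-valued upper semicontinuous triangle function Φ, then the Hausdorff–Pompeiu distance D is finite on pairs of nonempty closed bounded sets, D(A,B) = 0 implies A = B for such sets, D is symmetric, and Φ is a triangle function for D; hence the family F(X) of nonempty closed bounded subsets equipped with D is a semimetric space. -/
open Set Filter Topology ENNReal

open Semimetric

private lemma hd_set_mem {X : Type*} {d : X → X → ℝ} {A B : Set X} {ε : ℝ≥0∞}
    (h : ε ∈ {ε : ℝ≥0∞ | 0 < ε ∧ (∀ a ∈ A, ∃ b ∈ B, ENNReal.ofReal (d a b) < ε) ∧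
      (∀ b ∈ B, ∃ a ∈ A, ENNReal.ofReal (d b a) < ε)}) : HD d A B ≤ ε := sInf_le h

/-- Finiteness of the Hausdorff distance. -/
private lemma hd_ne_top {X : Type*} (d : X → X → ℝ)
    (hpos : ∀ x y, 0 ≤ d x y) (Φ : ℝ → ℝ → ℝ)
    (hΦmono : ∀ u₁ u₂ v, 0 ≤ u₁ → u₁ ≤ u₂ → 0 ≤ v → Φ u₁ v ≤ Φ u₂ v)
    (hΦnonneg : ∀ u v, 0 ≤ u → 0 ≤ v → 0 ≤ Φ u v)
    (hΦtri : ∀ x y z : X, d x y ≤ Φ (d x z) (d z y))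
    {A B : Set X} (hA : A.Nonempty ∧ IsClosedS d A ∧ BoundedS d A)
    (hB : B.Nonempty ∧ IsClosedS d B ∧ BoundedS d B) : HD d A B ≠ ⊤ := by
  obtain ⟨⟨a₀, ha₀⟩, -, MA, hMA⟩ := hA
  obtain ⟨⟨b₀, hb₀⟩, -, MB, hMB⟩ := hB
  have hMA0 : 0 ≤ MA := le_trans (hpos a₀ a₀) (hMA a₀ ha₀ a₀ ha₀)
  have hMB0 : 0 ≤ MB := le_trans (hpos b₀ b₀) (hMB b₀ hb₀ b₀ hb₀)
  set r : ℝ := Φ MA (d a₀ b₀) + Φ MB (d b₀ a₀) + 1 with hr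
  have h1 : 0 ≤ Φ MA (d a₀ b₀) := hΦnonneg _ _ hMA0 (hpos _ _)
  have h2 : 0 ≤ Φ MB (d b₀ a₀) := hΦnonneg _ _ hMB0 (hpos _ _)
  have hrpos : 0 < r := by positivity
  have hmem : ENNReal.ofReal r ∈ {ε : ℝ≥0∞ | 0 < ε ∧
      (∀ a ∈ A, ∃ b ∈ B, ENNReal.ofReal (d a b) < ε) ∧
      (∀ b ∈ B, ∃ a ∈ A, ENNReal.ofReal (d b a) < ε)} := by
    refine ⟨ENNReal.ofReal_pos.mpr hrpos, ?_, ?_⟩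
    · intro a ha
      refine ⟨b₀, hb₀, ?_⟩
      have : d a b₀ ≤ Φ MA (d a₀ b₀) := by
        calc d a b₀ ≤ Φ (d a a₀) (d a₀ b₀) := hΦtri a b₀ a₀
          _ ≤ Φ MA (d a₀ b₀) := hΦmono _ _ _ (hpos _ _) (hMA a ha a₀ ha₀) (hpos _ _)
      exact (ENNReal.ofReal_lt_ofReal_iff hrpos).mpr (lt_of_le_of_lt this (by linarith))
    · intro b hb
      refine ⟨a₀, ha₀, ?_⟩
      have : d b a₀ ≤ Φ MB (d b₀ a₀) := by
        calc d b a₀ ≤ Φ (d b b₀) (d b₀ a₀) := hΦtri b a₀ b₀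
          _ ≤ Φ MB (d b₀ a₀) := hΦmono _ _ _ (hpos _ _) (hMB b hb b₀ hb₀) (hpos _ _)
      exact (ENNReal.ofReal_lt_ofReal_iff hrpos).mpr (lt_of_le_of_lt this (by linarith))
  exact ne_top_of_le_ne_top ENNReal.ofReal_ne_top (hd_set_mem hmem)

/-- Triangle step with finite strict bounds. -/
private lemma hd_tri {X : Type*} (d : X → X → ℝ)
    (hpos : ∀ x y, 0 ≤ d x y) (Φ : ℝ → ℝ → ℝ)
    (hΦsymm : ∀ u v, Φ u v = Φ v u)
    (hΦmono : ∀ u₁ u₂ v, 0 ≤ u₁ → u₁ ≤ u₂ → 0 ≤ v → Φ u₁ v ≤ Φ u₂ v)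
    (hΦtri : ∀ x y z : X, d x y ≤ Φ (d x z) (d z y))
    {A B C : Set X} {s₁ s₂ : ℝ}
    (h₁ : HD d A C < ENNReal.ofReal s₁) (h₂ : HD d C B < ENNReal.ofReal s₂) :
    HD d A B ≤ ENNReal.ofReal (Φ s₁ s₂) := by
  obtain ⟨ε₁, hε₁mem, hε₁⟩ := sInf_lt_iff.mp h₁
  obtain ⟨ε₂, hε₂mem, hε₂⟩ := sInf_lt_iff.mp h₂
  obtain ⟨-, hAC, hCA⟩ := hε₁mem
  obtain ⟨-, hCB, hBC⟩ := hε₂mem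
  have key : ∀ (x y z : X) (t₁ t₂ : ℝ), d x y ≤ t₁ → d y z ≤ t₂ → d x z ≤ Φ t₁ t₂ := by
    intro x y z t₁ t₂ hxy hyz
    calc d x z ≤ Φ (d x y) (d y z) := hΦtri x z y
      _ ≤ Φ t₁ (d y z) := hΦmono _ _ _ (hpos _ _) hxy (hpos _ _)
      _ = Φ (d y z) t₁ := hΦsymm _ _
      _ ≤ Φ t₂ t₁ := hΦmono _ _ _ (hpos _ _) hyz (le_trans (hpos x y) hxy)
      _ = Φ t₁ t₂ := hΦsymm _ _
  have toR : ∀ (x y : X) (ε : ℝ≥0∞) (s : ℝ), ENNReal.ofReal (d x y) < ε →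
      ε < ENNReal.ofReal s → d x y ≤ s := by
    intro x y ε s h1 h2
    have := lt_trans h1 h2
    exact (lt_of_lt_of_le ((ENNReal.ofReal_lt_ofReal_iff_of_nonneg (hpos x y)).mp this)
      le_rfl).le
  refine ENNReal.le_of_forall_pos_le_add fun η hη _ => ?_
  refine hd_set_mem ⟨?_, ?_, ?_⟩
  · exact lt_of_lt_of_le (by exact_mod_cast hη) le_add_self
  · intro a ha
    obtain ⟨c, hc, hac⟩ := hAC a ha
    obtain ⟨b, hb, hcb⟩ := hCB c hc
    refine ⟨b, hb, lt_of_le_of_lt (ENNReal.ofReal_le_ofReal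
      (key a c b s₁ s₂ (toR a c ε₁ s₁ hac hε₁) (toR c b ε₂ s₂ hcb hε₂))) ?_⟩
    exact ENNReal.lt_add_right ENNReal.ofReal_ne_top (by exact_mod_cast hη.ne')
  · intro b hb
    obtain ⟨c, hc, hbc⟩ := hBC b hb
    obtain ⟨a, ha, hca⟩ := hCA c hc
    have hba : d b a ≤ Φ s₁ s₂ := by
      rw [hΦsymm]
      exact key b c a s₂ s₁ (toR b c ε₂ s₂ hbc hε₂) (toR c a ε₁ s₁ hca hε₁)
    refine ⟨a, ha, lt_of_le_of_lt (ENNReal.ofReal_le_ofReal hba) ?_⟩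
    exact ENNReal.lt_add_right ENNReal.ofReal_ne_top (by exact_mod_cast hη.ne')

/-- (F(X), D) is a semimetric space with triangle function Φ. -/
theorem statement12 {X : Type*} (d : X → X → ℝ)
    (hpos : ∀ x y, 0 ≤ d x y) (hsymm : ∀ x y, d x y = d y x)
    (hzero : ∀ x y, d x y = 0 ↔ x = y)
    (Φ : ℝ → ℝ → ℝ) (hΦ : IsTriangleFunR d Φ)
    (husc : UpperSemicontinuousOn (fun p : ℝ × ℝ => Φ p.1 p.2) (Set.Ici 0 ×ˢ Set.Ici 0)) :
    (∀ A B : Set X, (A.Nonempty ∧ IsClosedS d A ∧ BoundedS d A) →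
        (B.Nonempty ∧ IsClosedS d B ∧ BoundedS d B) → HD d A B ≠ ⊤) ∧
    (∀ A B : Set X, (A.Nonempty ∧ IsClosedS d A ∧ BoundedS d A) →
        (B.Nonempty ∧ IsClosedS d B ∧ BoundedS d B) → HD d A B = 0 → A = B) ∧
    (∀ A B : Set X, HD d A B = HD d B A) ∧
    (∀ A B C : Set X, (A.Nonempty ∧ IsClosedS d A ∧ BoundedS d A) →
        (B.Nonempty ∧ IsClosedS d B ∧ BoundedS d B) →
        (C.Nonempty ∧ IsClosedS d C ∧ BoundedS d C) →
        HD d A B ≤ ENNReal.ofReal (Φ (HD d A C).toReal (HD d C B).toReal)) := by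
  obtain ⟨hΦsymm, hΦmono, hΦnonneg, hΦ00, hΦtri⟩ := hΦ
  have part1 : ∀ A B : Set X, (A.Nonempty ∧ IsClosedS d A ∧ BoundedS d A) →
      (B.Nonempty ∧ IsClosedS d B ∧ BoundedS d B) → HD d A B ≠ ⊤ :=
    fun A B hA hB => hd_ne_top d hpos Φ hΦmono hΦnonneg hΦtri hA hB
  refine ⟨part1, ?_, ?_, ?_⟩
  · -- HD = 0 implies A = B
    intro A B hA hB h0
    have main : ∀ (A B : Set X), IsClosedS d B → HD d A B = 0 →
        (∀ ε ∈ {ε : ℝ≥0∞ | 0 < ε ∧ (∀ a ∈ A, ∃ b ∈ B, ENNReal.ofReal (d a b) < ε) ∧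
          (∀ b ∈ B, ∃ a ∈ A, ENNReal.ofReal (d b a) < ε)},
          (∀ a ∈ A, ∃ b ∈ B, ENNReal.ofReal (d a b) < ε)) → A ⊆ B := by
      intro A B hBc h0 hfwd a ha
      by_contra haB
      obtain ⟨r, hr, hball⟩ := hBc a haB
      have hlt : HD d A B < ENNReal.ofReal r := by
        rw [h0]; exact ENNReal.ofReal_pos.mpr hr
      obtain ⟨ε, hεmem, hε⟩ := sInf_lt_iff.mp hlt
      obtain ⟨b, hb, hab⟩ := hfwd ε hεmem a ha
      have : d a b < r := by
        have := lt_trans hab hε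
        exact (ENNReal.ofReal_lt_ofReal_iff_of_nonneg (hpos a b)).mp this
      have hbmem : b ∈ Ball d a r := by
        show d b a < r
        rwa [← hsymm]
      exact hball hbmem hb
    apply Set.Subset.antisymm
    · exact main A B hB.2.1 h0 (fun ε hε => hε.2.1)
    · refine main B A hA.2.1 ?_ (fun ε hε => hε.2.1)
      · -- HD B A = 0 : symmetry of the defining set
        rw [show HD d B A = HD d A B from ?_]
        · exact h0
        · unfold HD
          congr 1
          ext ε
          constructor
          · rintro ⟨h1, h2, h3⟩; exact ⟨h1, h3, h2⟩
          · rintro ⟨h1, h2, h3⟩; exact ⟨h1, h3, h2⟩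
  · -- symmetry
    intro A B
    unfold HD
    congr 1
    ext ε
    constructor
    · rintro ⟨h1, h2, h3⟩; exact ⟨h1, h3, h2⟩
    · rintro ⟨h1, h2, h3⟩; exact ⟨h1, h3, h2⟩
  · -- triangle inequality
    intro A B C hA hB hC
    set u := HD d A C with hu
    set v := HD d C B with hv
    have hune : u ≠ ⊤ := part1 A C hA hC
    have hvne : v ≠ ⊤ := part1 C B hC hB
    set u₀ := u.toReal with hu₀
    set v₀ := v.toReal with hv₀
    have hu₀0 : 0 ≤ u₀ := ENNReal.toReal_nonneg
    have hv₀0 : 0 ≤ v₀ := ENNReal.toReal_nonneg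
    by_contra hcon
    push_neg at hcon
    -- get a real c with Φ u₀ v₀ < c and ofReal c < HD d A B
    obtain ⟨c, hc1, hc2⟩ : ∃ c : ℝ, Φ u₀ v₀ < c ∧ ENNReal.ofReal c < HD d A B := by
      rcases eq_or_ne (HD d A B) ⊤ with htop | hne
      · exact ⟨Φ u₀ v₀ + 1, by linarith, by rw [htop]; exact ENNReal.ofReal_lt_top⟩
      · obtain ⟨c, hc0, hc1, hc2⟩ := ENNReal.lt_iff_exists_real_btwn.mp hcon
        refine ⟨c, ?_, hc2⟩
        rwa [ENNReal.ofReal_lt_ofReal_iff_of_nonneg (hΦnonneg _ _ hu₀0 hv₀0)] at hc1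
    -- use upper semicontinuity at (u₀, v₀)
    have hmem : ((u₀, v₀) : ℝ × ℝ) ∈ Set.Ici (0:ℝ) ×ˢ Set.Ici (0:ℝ) := ⟨hu₀0, hv₀0⟩
    have hev := husc (u₀, v₀) hmem c hc1
    -- approach along the sequence (u₀ + 1/(n+1), v₀ + 1/(n+1))
    set seq : ℕ → ℝ × ℝ := fun n => (u₀ + 1 / (n + 1), v₀ + 1 / (n + 1)) with hseq
    have htend : Tendsto seq atTop (𝓝[Set.Ici (0:ℝ) ×ˢ Set.Ici (0:ℝ)] (u₀, v₀)) := by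
      rw [tendsto_nhdsWithin_iff]
      constructor
      · have h1 : Tendsto (fun n : ℕ => u₀ + 1 / (n + 1 : ℝ)) atTop (𝓝 u₀) := by
          simpa using (tendsto_const_nhds : Tendsto (fun _ : ℕ => u₀) atTop (𝓝 u₀)).add
            (tendsto_one_div_add_atTop_nhds_zero_nat : Tendsto (fun n : ℕ => 1 / ((n : ℝ) + 1)) atTop (𝓝 0))
        have h2 : Tendsto (fun n : ℕ => v₀ + 1 / (n + 1 : ℝ)) atTop (𝓝 v₀) := by
          simpa using (tendsto_const_nhds : Tendsto (fun _ : ℕ => v₀) atTop (𝓝 v₀)).add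
            (tendsto_one_div_add_atTop_nhds_zero_nat : Tendsto (fun n : ℕ => 1 / ((n : ℝ) + 1)) atTop (𝓝 0))
        exact h1.prodMk_nhds h2
      · refine Filter.Eventually.of_forall fun n => ⟨?_, ?_⟩ <;>
          · simp only [Set.mem_Ici]
            positivity
    obtain ⟨n, hn⟩ := (htend.eventually hev).exists
    set s₁ : ℝ := u₀ + 1 / (n + 1) with hs₁
    set s₂ : ℝ := v₀ + 1 / (n + 1) with hs₂
    have hinv : (0:ℝ) < 1 / (n + 1) := by positivity
    have h₁ : u < ENNReal.ofReal s₁ := by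
      rw [ENNReal.lt_ofReal_iff_toReal_lt hune]
      show u₀ < s₁
      linarith
    have h₂ : v < ENNReal.ofReal s₂ := by
      rw [ENNReal.lt_ofReal_iff_toReal_lt hvne]
      show v₀ < s₂
      linarith
    have hle : HD d A B ≤ ENNReal.ofReal (Φ s₁ s₂) :=
      hd_tri d hpos Φ hΦsymm hΦmono hΦtri h₁ h₂
    have : HD d A B < HD d A B :=
      lt_of_le_of_lt (le_trans hle (ENNReal.ofReal_le_ofReal hn.le)) hc2
    exact absurd this (lt_irrefl _)
end

section
/- The Hausdorff–Pompeiu distance satisfies the triangle inequality D(A,B) ≤ Φ(D(A,C), D(C,B)) for all nonempty closed bounded subsets A, B, C of a semimetric space whose triangle function Φ is real-valued and upper semicontinuous. -/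
open Set Filter Topology ENNReal

open Semimetric

open Semimetric in
private lemma HD_lt_top' {X : Type*} (d : X → X → ℝ) (hpos : ∀ x y, 0 ≤ d x y)
    (Φ : ℝ → ℝ → ℝ) (hΦ : IsTriangleFunR d Φ)
    (A C : Set X) (hAne : A.Nonempty) (hCne : C.Nonempty)
    (hAb : BoundedS d A) (hCb : BoundedS d C) : HD d A C < ⊤ := by
  obtain ⟨a₀, ha₀⟩ := hAne
  obtain ⟨c₀, hc₀⟩ := hCne
  obtain ⟨MA, hMA⟩ := hAb
  obtain ⟨MC, hMC⟩ := hCb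
  obtain ⟨hΦsymm, hΦmono, hΦnn, hΦ00, hΦtri⟩ := hΦ
  set K := max (Φ MA (d a₀ c₀)) (Φ MC (d c₀ a₀)) with hK
  have hmem : ENNReal.ofReal K + 1 ∈ {ε : ℝ≥0∞ | 0 < ε ∧
      (∀ a ∈ A, ∃ c ∈ C, ENNReal.ofReal (d a c) < ε) ∧
      (∀ c ∈ C, ∃ a ∈ A, ENNReal.ofReal (d c a) < ε)} := by
    refine ⟨lt_of_lt_of_le zero_lt_one le_add_self, ?_, ?_⟩
    · intro a ha
      refine ⟨c₀, hc₀, ?_⟩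
      have h1 : d a c₀ ≤ K := by
        calc d a c₀ ≤ Φ (d a a₀) (d a₀ c₀) := hΦtri a c₀ a₀
          _ ≤ Φ MA (d a₀ c₀) := hΦmono _ _ _ (hpos _ _) (hMA a ha a₀ ha₀) (hpos _ _)
          _ ≤ K := le_max_left _ _
      calc ENNReal.ofReal (d a c₀) ≤ ENNReal.ofReal K := ENNReal.ofReal_le_ofReal h1
        _ < ENNReal.ofReal K + 1 := ENNReal.lt_add_right ENNReal.ofReal_ne_top one_ne_zero
    · intro c hc
      refine ⟨a₀, ha₀, ?_⟩
      have h1 : d c a₀ ≤ K := by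
        calc d c a₀ ≤ Φ (d c c₀) (d c₀ a₀) := hΦtri c a₀ c₀
          _ ≤ Φ MC (d c₀ a₀) := hΦmono _ _ _ (hpos _ _) (hMC c hc c₀ hc₀) (hpos _ _)
          _ ≤ K := le_max_right _ _
      calc ENNReal.ofReal (d c a₀) ≤ ENNReal.ofReal K := ENNReal.ofReal_le_ofReal h1
        _ < ENNReal.ofReal K + 1 := ENNReal.lt_add_right ENNReal.ofReal_ne_top one_ne_zero
  exact lt_of_le_of_lt (sInf_le hmem) (by simp [lt_top_iff_ne_top])

/-- triangle inequality for the Hausdorff–Pompeiu distance. -/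
theorem statement13 {X : Type*} (d : X → X → ℝ)
    (hpos : ∀ x y, 0 ≤ d x y) (hsymm : ∀ x y, d x y = d y x)
    (hzero : ∀ x y, d x y = 0 ↔ x = y)
    (Φ : ℝ → ℝ → ℝ) (hΦ : IsTriangleFunR d Φ)
    (husc : UpperSemicontinuousOn (fun p : ℝ × ℝ => Φ p.1 p.2) (Set.Ici 0 ×ˢ Set.Ici 0))
    (A B C : Set X)
    (hA : A.Nonempty ∧ IsClosedS d A ∧ BoundedS d A)
    (hB : B.Nonempty ∧ IsClosedS d B ∧ BoundedS d B)
    (hC : C.Nonempty ∧ IsClosedS d C ∧ BoundedS d C) :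
    HD d A B ≤ ENNReal.ofReal (Φ (HD d A C).toReal (HD d C B).toReal) := by
  obtain ⟨hAne, hAcl, hAb⟩ := hA
  obtain ⟨hBne, hBcl, hBb⟩ := hB
  obtain ⟨hCne, hCcl, hCb⟩ := hC
  obtain ⟨hΦsymm, hΦmono, hΦnn, hΦ00, hΦtri⟩ := hΦ
  have hΦ' : IsTriangleFunR d Φ := ⟨hΦsymm, hΦmono, hΦnn, hΦ00, hΦtri⟩
  have hACfin : HD d A C < ⊤ := HD_lt_top' d hpos Φ hΦ' A C hAne hCne hAb hCb
  have hCBfin : HD d C B < ⊤ := HD_lt_top' d hpos Φ hΦ' C B hCne hBne hCb hBb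
  set r := (HD d A C).toReal with hr
  set s := (HD d C B).toReal with hs
  have hr0 : (0:ℝ) ≤ r := ENNReal.toReal_nonneg
  have hs0 : (0:ℝ) ≤ s := ENNReal.toReal_nonneg
  have hΦrs0 : 0 ≤ Φ r s := hΦnn r s hr0 hs0
  refine ENNReal.le_of_forall_pos_le_add fun η hη _ => ?_
  have hηR : (0:ℝ) < (η:ℝ) := hη
  -- upper semicontinuity at (r, s)
  have h1 : ((r, s) : ℝ × ℝ) ∈ Set.Ici (0:ℝ) ×ˢ Set.Ici (0:ℝ) := ⟨hr0, hs0⟩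
  have h2 := husc (r, s) h1 (Φ r s + η) (by simpa using hηR)
  rw [Filter.eventually_iff, Metric.mem_nhdsWithin_iff] at h2
  obtain ⟨δ, hδ, hball⟩ := h2
  set ε : ℝ := r + δ / 2 with hε
  set ε' : ℝ := s + δ / 2 with hε'
  have hεpos : 0 < ε := by positivity
  have hε'pos : 0 < ε' := by positivity
  have hmemball : ((ε, ε') : ℝ × ℝ) ∈ Metric.ball ((r, s) : ℝ × ℝ) δ ∩
      (Set.Ici (0:ℝ) ×ˢ Set.Ici (0:ℝ)) := by
    constructor
    · rw [Metric.mem_ball, Prod.dist_eq]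
      simp only [Real.dist_eq, hε, hε']
      rw [show r + δ / 2 - r = δ / 2 by ring, show s + δ / 2 - s = δ / 2 by ring]
      rw [abs_of_nonneg (by positivity)]
      simp only [max_self]
      linarith
    · exact ⟨le_of_lt hεpos, le_of_lt hε'pos⟩
  have hΦεε' : Φ ε ε' < Φ r s + η := hball hmemball
  -- get witnesses from the infima
  have hAC : HD d A C < ENNReal.ofReal ε := by
    rw [← ENNReal.ofReal_toReal hACfin.ne, ← hr]
    exact (ENNReal.ofReal_lt_ofReal_iff hεpos).mpr (by simp [hε]; linarith)
  have hCB : HD d C B < ENNReal.ofReal ε' := by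
    rw [← ENNReal.ofReal_toReal hCBfin.ne, ← hs]
    exact (ENNReal.ofReal_lt_ofReal_iff hε'pos).mpr (by simp [hε']; linarith)
  rw [HD, sInf_lt_iff] at hAC hCB
  obtain ⟨ε₀, ⟨hε₀pos, hε₀AC, hε₀CA⟩, hε₀lt⟩ := hAC
  obtain ⟨ε₁, ⟨hε₁pos, hε₁CB, hε₁BC⟩, hε₁lt⟩ := hCB
  have hΦrsη : (0:ℝ) < Φ r s + η := by linarith
  have hmem : ENNReal.ofReal (Φ r s + η) ∈ {ε : ℝ≥0∞ | 0 < ε ∧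
      (∀ a ∈ A, ∃ b ∈ B, ENNReal.ofReal (d a b) < ε) ∧
      (∀ b ∈ B, ∃ a ∈ A, ENNReal.ofReal (d b a) < ε)} := by
    refine ⟨ENNReal.ofReal_pos.mpr hΦrsη, ?_, ?_⟩
    · intro a ha
      obtain ⟨c, hc, hac⟩ := hε₀AC a ha
      have hac' : d a c < ε := by
        have := lt_trans hac hε₀lt
        exact (ENNReal.ofReal_lt_ofReal_iff hεpos).mp this
      obtain ⟨b, hb, hcb⟩ := hε₁CB c hc
      have hcb' : d c b < ε' := by
        have := lt_trans hcb hε₁lt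
        exact (ENNReal.ofReal_lt_ofReal_iff hε'pos).mp this
      refine ⟨b, hb, ?_⟩
      have hdab : d a b < Φ r s + η := by
        calc d a b ≤ Φ (d a c) (d c b) := hΦtri a b c
          _ ≤ Φ ε (d c b) := hΦmono _ _ _ (hpos _ _) hac'.le (hpos _ _)
          _ = Φ (d c b) ε := hΦsymm _ _
          _ ≤ Φ ε' ε := hΦmono _ _ _ (hpos _ _) hcb'.le hεpos.le
          _ = Φ ε ε' := hΦsymm _ _
          _ < Φ r s + η := hΦεε'
      exact (ENNReal.ofReal_lt_ofReal_iff hΦrsη).mpr hdab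
    · intro b hb
      obtain ⟨c, hc, hbc⟩ := hε₁BC b hb
      have hbc' : d b c < ε' := by
        have := lt_trans hbc hε₁lt
        exact (ENNReal.ofReal_lt_ofReal_iff hε'pos).mp this
      obtain ⟨a, ha, hca⟩ := hε₀CA c hc
      have hca' : d c a < ε := by
        have := lt_trans hca hε₀lt
        exact (ENNReal.ofReal_lt_ofReal_iff hεpos).mp this
      refine ⟨a, ha, ?_⟩
      have hdba : d b a < Φ r s + η := by
        calc d b a ≤ Φ (d b c) (d c a) := hΦtri b a c
          _ ≤ Φ ε' (d c a) := hΦmono _ _ _ (hpos _ _) hbc'.le (hpos _ _)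
          _ = Φ (d c a) ε' := hΦsymm _ _
          _ ≤ Φ ε ε' := hΦmono _ _ _ (hpos _ _) hca'.le hε'pos.le
          _ < Φ r s + η := hΦεε'
      exact (ENNReal.ofReal_lt_ofReal_iff hΦrsη).mpr hdba
  calc HD d A B ≤ ENNReal.ofReal (Φ r s + η) := sInf_le hmem
    _ = ENNReal.ofReal (Φ r s) + ENNReal.ofReal (η:ℝ) :=
        ENNReal.ofReal_add hΦrs0 hηR.le
    _ = ENNReal.ofReal (Φ r s) + η := by rw [ENNReal.ofReal_coe_nnreal]
end

section
/- If (X,d) is a complete semimetric space with a real-valued upper semicontinuous triangle function Φ, then the semimetric space (F(X), D) of nonempty closed bounded subsets with the Hausdorff–Pompeiu distance is complete; moreover, the limit of a Cauchy sequence (A_n) is the set A = { x ∈ X : ∃ (x_k) with x_k ∈ A_k for all k and x_k → x } (Blaschke's theorem for semimetric spaces). -/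
open Set Filter Topology ENNReal

open Semimetric

section Aux
open Set Filter Topology ENNReal

lemma aux_interval_index {M : ℕ → ℕ} (hM : ∀ k, M k < M (k+1)) :
    ∃ g : ℕ → ℕ, (∀ i, M 0 ≤ i → M (g i) ≤ i ∧ i < M (g i + 1)) ∧
      ∀ K i, M K ≤ i → K ≤ g i := by
  classical
  have hs : StrictMono M := strictMono_nat_of_lt_succ hM
  refine ⟨fun i => Nat.findGreatest (fun k => M k ≤ i) i, fun i hi => ?_, fun K i hK => ?_⟩
  · constructor
    · exact Nat.findGreatest_spec (P := fun k => M k ≤ i) (m := 0) (Nat.zero_le i) hi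
    · by_contra hcon
      push_neg at hcon
      have h1 : Nat.findGreatest (fun k => M k ≤ i) i + 1 ≤ i :=
        le_trans (hs.le_apply) hcon
      have := Nat.le_findGreatest (P := fun k => M k ≤ i) h1 hcon
      omega
  · exact Nat.le_findGreatest (P := fun k => M k ≤ i) (le_trans hs.le_apply hK) hK

lemma aux_shrink {Φ : ℝ → ℝ → ℝ}
    (husc : UpperSemicontinuousOn (fun p : ℝ × ℝ => Φ p.1 p.2) (Set.Ici 0 ×ˢ Set.Ici 0))
    (h00 : Φ 0 0 = 0) :
    ∀ ε > (0:ℝ), ∃ δ, 0 < δ ∧ δ ≤ ε/2 ∧ Φ δ δ < ε := by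
  intro ε hε
  have h0 : ((0:ℝ),(0:ℝ)) ∈ Set.Ici (0:ℝ) ×ˢ Set.Ici (0:ℝ) :=
    Set.mem_prod.mpr ⟨Set.self_mem_Ici, Set.self_mem_Ici⟩
  have hev := husc _ h0 ε (by simpa [h00] using hε)
  have hcont : Tendsto (fun δ : ℝ => ((δ, δ) : ℝ × ℝ)) (𝓝 0) (𝓝 ((0:ℝ), (0:ℝ))) :=
    (continuous_id.prodMk continuous_id).tendsto 0
  have htt : Tendsto (fun δ : ℝ => ((δ, δ) : ℝ × ℝ)) (𝓝[>] (0:ℝ))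
      (𝓝[Set.Ici (0:ℝ) ×ˢ Set.Ici (0:ℝ)] (0,0)) := by
    apply tendsto_nhdsWithin_of_tendsto_nhds_of_eventually_within
    · exact hcont.mono_left nhdsWithin_le_nhds
    · filter_upwards [self_mem_nhdsWithin] with δ hδ
      exact Set.mem_prod.mpr ⟨Set.mem_Ici.mpr (le_of_lt (Set.mem_Ioi.mp hδ)), Set.mem_Ici.mpr (le_of_lt (Set.mem_Ioi.mp hδ))⟩
  have h2 : ∀ᶠ δ in 𝓝[>] (0:ℝ), Φ δ δ < ε := htt.eventually hev
  have h3 : ∀ᶠ δ in 𝓝[>] (0:ℝ), δ ≤ ε/2 := by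
    have : ∀ᶠ δ in 𝓝 (0:ℝ), δ < ε/2 :=
      eventually_of_mem (Iio_mem_nhds (by linarith)) (fun x hx => hx)
    exact (this.filter_mono nhdsWithin_le_nhds).mono fun δ h => h.le
  have h4 : ∀ᶠ δ in 𝓝[>] (0:ℝ), 0 < δ := self_mem_nhdsWithin
  obtain ⟨δ, hΦδ, hδhalf, hδpos⟩ := (h2.and (h3.and h4)).exists
  exact ⟨δ, hδpos, hδhalf, hΦδ⟩

lemma aux_chain {Φ : ℝ → ℝ → ℝ}
    (hsh : ∀ ε > (0:ℝ), ∃ δ, 0 < δ ∧ δ ≤ ε/2 ∧ Φ δ δ < ε) {ε : ℝ} (hε : 0 < ε) :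
    ∃ E : ℕ → ℝ, E 0 = ε ∧ (∀ k, 0 < E k) ∧ (∀ k, E (k+1) ≤ E k/2) ∧
      ∀ k, Φ (E (k+1)) (E (k+1)) < E k := by
  choose f hf1 hf2 hf3 using hsh
  let g : {t : ℝ // 0 < t} → {t : ℝ // 0 < t} := fun t => ⟨f t.1 t.2, hf1 t.1 t.2⟩
  refine ⟨fun k => (g^[k] ⟨ε, hε⟩).1, rfl, fun k => (g^[k] ⟨ε, hε⟩).2, fun k => ?_, fun k => ?_⟩
  · simp only [Function.iterate_succ_apply']
    exact hf2 _ _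
  · simp only [Function.iterate_succ_apply']
    exact hf3 _ _

lemma aux_hd_lt {X : Type*} {d : X → X → ℝ} {B C : Set X} {e : ℝ≥0∞}
    (h : HD d B C < e) :
    (∀ b ∈ B, ∃ c ∈ C, ENNReal.ofReal (d b c) < e) ∧
    (∀ c ∈ C, ∃ b ∈ B, ENNReal.ofReal (d c b) < e) := by
  obtain ⟨ε', hε'S, hlt⟩ := sInf_lt_iff.mp h
  obtain ⟨-, h1, h2⟩ := hε'S
  constructor
  · intro b hb; obtain ⟨c, hc, hd⟩ := h1 b hb; exact ⟨c, hc, hd.trans hlt⟩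
  · intro c hc; obtain ⟨b, hb, hd⟩ := h2 c hc; exact ⟨b, hb, hd.trans hlt⟩

end Aux

/-- Blaschke's theorem: (F(X), D) is complete, with the limit
of a Cauchy sequence given explicitly. -/
theorem statement14 {X : Type*} (d : X → X → ℝ)
    (hpos : ∀ x y, 0 ≤ d x y) (hsymm : ∀ x y, d x y = d y x)
    (hzero : ∀ x y, d x y = 0 ↔ x = y)
    (hcomplete : IsCompleteS d)
    (Φ : ℝ → ℝ → ℝ) (hΦ : IsTriangleFunR d Φ)
    (husc : UpperSemicontinuousOn (fun p : ℝ × ℝ => Φ p.1 p.2) (Set.Ici 0 ×ˢ Set.Ici 0))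
    (A : ℕ → Set X)
    (hA : ∀ n, (A n).Nonempty ∧ IsClosedS d (A n) ∧ BoundedS d (A n))
    (hCauchy : ∀ ε : ℝ≥0∞, 0 < ε → ∃ N, ∀ m ≥ N, ∀ n ≥ N, HD d (A m) (A n) < ε) :
    (({x : X | ∃ xk : ℕ → X, (∀ k, xk k ∈ A k) ∧ ConvTo d xk x}).Nonempty ∧
      IsClosedS d {x : X | ∃ xk : ℕ → X, (∀ k, xk k ∈ A k) ∧ ConvTo d xk x} ∧
      BoundedS d {x : X | ∃ xk : ℕ → X, (∀ k, xk k ∈ A k) ∧ ConvTo d xk x}) ∧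
    Tendsto (fun n => HD d (A n)
        {x : X | ∃ xk : ℕ → X, (∀ k, xk k ∈ A k) ∧ ConvTo d xk x})
      atTop (nhds 0) := by
  classical
  obtain ⟨hΦsymm, hΦmono, hΦnn, hΦ00, hΦtri⟩ := hΦ
  set Ainf := {x : X | ∃ xk : ℕ → X, (∀ k, xk k ∈ A k) ∧ ConvTo d xk x} with hAinfdef
  have hd0 : ∀ x, d x x = 0 := fun x => (hzero x x).mpr rfl
  have mono2 : ∀ u u' v v', 0 ≤ u → u ≤ u' → 0 ≤ v → v ≤ v' → Φ u v ≤ Φ u' v' := by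
    intro u u' v v' hu huu hv hvv
    calc Φ u v ≤ Φ u' v := hΦmono u u' v hu huu hv
      _ = Φ v u' := hΦsymm _ _
      _ ≤ Φ v' u' := hΦmono v v' u' hv hvv (hu.trans huu)
      _ = Φ u' v' := hΦsymm _ _
  have hsh := aux_shrink husc hΦ00
  have cont00 : ∀ t > (0:ℝ), ∃ δ > (0:ℝ), ∀ u v, 0 ≤ u → u ≤ δ → 0 ≤ v → v ≤ δ → Φ u v < t := by
    intro t ht
    obtain ⟨δ, hδ0, _, hδΦ⟩ := hsh t ht
    exact ⟨δ, hδ0, fun u v hu huδ hv hvδ => lt_of_le_of_lt (mono2 u δ v δ hu huδ hv hvδ) hδΦ⟩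
  -- L1: every point of a far tail set is ε-close to a point of Ainf
  have L1 : ∀ ε > (0:ℝ), ∃ N, ∀ n ≥ N, ∀ a ∈ A n, ∃ x ∈ Ainf, d a x < ε := by
    intro ε hε
    obtain ⟨E, hE00, hE0, hEhalf, hEΦ⟩ := aux_chain hsh hε
    have hEanti : Antitone E := antitone_nat_of_succ_le fun k => (hEhalf k).trans
      (by have := hE0 k; linarith)
    have hEpow : ∀ k, E k ≤ ε / 2^k := by
      intro k; induction k with
      | zero => simp [hE00]
      | succ k ih =>
        calc E (k+1) ≤ E k / 2 := hEhalf k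
          _ ≤ (ε / 2^k)/2 := by linarith
          _ = ε / 2^(k+1) := by ring
    have hEsmall : ∀ t > (0:ℝ), ∃ K, E K < t := by
      intro t ht
      obtain ⟨K, hK⟩ := pow_unbounded_of_one_lt (ε/t) one_lt_two
      refine ⟨K, lt_of_le_of_lt (hEpow K) ?_⟩
      rw [div_lt_iff₀ (by positivity : (0:ℝ) < 2^K)]
      rw [div_lt_iff₀ ht] at hK
      nlinarith
    choose Nk hNk using fun k =>
      hCauchy (ENNReal.ofReal (E k)) (ENNReal.ofReal_pos.mpr (hE0 k))
    refine ⟨Nk 2, fun n hn a ha => ?_⟩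
    set S : ℕ → ℕ := fun k => Finset.sup (Finset.range (k+1)) Nk with hSdef
    have hNkS : ∀ j k, j ≤ k → Nk j ≤ S k := fun j k hjk =>
      Finset.le_sup (Finset.mem_range.mpr (by omega))
    set M : ℕ → ℕ := fun k => Nat.rec n (fun k Mk => max (Mk + 1) (S (k+3))) k with hMdef
    have hMsucc : ∀ k, M (k+1) = max (M k + 1) (S (k+3)) := fun k => rfl
    have hMlt : ∀ k, M k < M (k+1) := fun k => by rw [hMsucc]; omega
    have hMge : ∀ k, Nk (k+2) ≤ M k := by
      intro k; cases k with
      | zero => exact hn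
      | succ k =>
        rw [hMsucc]
        exact le_trans (hNkS (k+3) (k+3) le_rfl) (le_trans (le_max_right _ _) le_rfl)
    have hHD : ∀ k, ∀ j, M k ≤ j → HD d (A (M k)) (A j) < ENNReal.ofReal (E (k+2)) :=
      fun k j hj => hNk (k+2) (M k) (hMge k) j (le_trans (hMge k) hj)
    have hstep : ∀ k, ∀ z ∈ A (M k), ∃ w ∈ A (M (k+1)), d z w < E (k+2) := by
      intro k z hz
      obtain ⟨w, hw, hdw⟩ := (aux_hd_lt (hHD k (M (k+1)) (hMlt k).le)).1 z hz
      exact ⟨w, hw, (ENNReal.ofReal_lt_ofReal_iff (hE0 _)).mp hdw⟩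
    choose! f hf1 hf2 using hstep
    set y : ℕ → X := fun k => Nat.rec a (fun k yk => f k yk) k with hydef
    have hysucc : ∀ k, y (k+1) = f k (y k) := fun k => rfl
    have hyA : ∀ k, y k ∈ A (M k) := by
      intro k; induction k with
      | zero => exact ha
      | succ k ih => rw [hysucc]; exact hf1 k (y k) ih
    have hyd : ∀ k, d (y k) (y (k+1)) < E (k+2) := by
      intro k; rw [hysucc]; exact hf2 k (y k) (hyA k)
    have hchain : ∀ m k, d (y k) (y (k+1+m)) < E (k+1) := by
      intro m
      induction m with
      | zero => exact fun k => lt_of_lt_of_le (hyd k) (hEanti (by omega : k+1 ≤ k+2))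
      | succ m ih =>
        intro k
        have h2 : d (y (k+1)) (y (k+1+(m+1))) < E (k+2) := by
          have := ih (k+1)
          rwa [show (k+1)+1+m = k+1+(m+1) from by omega] at this
        calc d (y k) (y (k+1+(m+1)))
            ≤ Φ (d (y k) (y (k+1))) (d (y (k+1)) (y (k+1+(m+1)))) := hΦtri _ _ _
          _ ≤ Φ (E (k+2)) (E (k+2)) :=
            mono2 _ _ _ _ (hpos _ _) (hyd k).le (hpos _ _) h2.le
          _ < E (k+1) := hEΦ (k+1)
    have hchain' : ∀ k l, k < l → d (y k) (y l) < E (k+1) := by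
      intro k l hkl
      have := hchain (l - (k+1)) k
      rwa [show k+1+(l-(k+1)) = l from by omega] at this
    have hycauchy : IsCauchyS d y := by
      intro t ht
      obtain ⟨K, hK⟩ := hEsmall t ht
      refine ⟨K, fun m hm l hl => ?_⟩
      rcases lt_trichotomy m l with h | h | h
      · have := (hchain' m l h).trans_le (hEanti (by omega : K ≤ m + 1))
        exact this.trans hK
      · rw [h, hd0]; exact ht
      · rw [hsymm]
        have := (hchain' l m h).trans_le (hEanti (by omega : K ≤ l + 1))
        exact this.trans hK
    obtain ⟨x, hx⟩ := hcomplete y hycauchy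
    have hx' : Tendsto (fun l => d (y l) x) atTop (𝓝 0) := hx
    have hyx : ∀ k, d (y k) x < E k := by
      intro k
      have hmem : ((E (k+1), (0:ℝ)) : ℝ × ℝ) ∈ Set.Ici (0:ℝ) ×ˢ Set.Ici (0:ℝ) :=
        Set.mem_prod.mpr ⟨(hE0 (k+1)).le, Set.self_mem_Ici⟩
      have hlt : Φ (E (k+1)) 0 < E k :=
        lt_of_le_of_lt (mono2 _ _ _ _ (hE0 (k+1)).le le_rfl le_rfl (hE0 (k+1)).le) (hEΦ k)
      have husc' := husc _ hmem (E k) hlt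
      have htt : Tendsto (fun l => ((E (k+1), d (y l) x) : ℝ × ℝ)) atTop
          (𝓝[Set.Ici (0:ℝ) ×ˢ Set.Ici (0:ℝ)] (E (k+1), 0)) := by
        apply tendsto_nhdsWithin_of_tendsto_nhds_of_eventually_within
        · exact tendsto_const_nhds.prodMk_nhds hx'
        · exact Eventually.of_forall fun l => Set.mem_prod.mpr ⟨(hE0 (k+1)).le, hpos _ _⟩
      obtain ⟨l, hl1, hl2⟩ := ((htt.eventually husc').and (eventually_gt_atTop k)).exists
      calc d (y k) x ≤ Φ (d (y k) (y l)) (d (y l) x) := hΦtri _ _ _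
        _ ≤ Φ (E (k+1)) (d (y l) x) :=
          hΦmono _ _ _ (hpos _ _) (hchain' k l hl2).le (hpos _ _)
        _ < E k := hl1
    obtain ⟨g, hg1, hg2⟩ := aux_interval_index hMlt
    have hzex : ∀ j, ∃ w, w ∈ A j ∧ (M 0 ≤ j → d (y (g j)) w < E (g j + 2)) := by
      intro j
      by_cases hj : M 0 ≤ j
      · obtain ⟨w, hw, hdw⟩ := (aux_hd_lt (hHD (g j) j (hg1 j hj).1)).1 (y (g j)) (hyA (g j))
        exact ⟨w, hw, fun _ => (ENNReal.ofReal_lt_ofReal_iff (hE0 _)).mp hdw⟩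
      · exact ⟨(hA j).1.choose, (hA j).1.choose_spec, fun h => absurd h hj⟩
    choose z hz1 hz2 using hzex
    have hzconv : Tendsto (fun j => d (z j) x) atTop (𝓝 0) := by
      rw [Metric.tendsto_atTop]
      intro t ht
      obtain ⟨δ, hδ0, hδΦ⟩ := cont00 t ht
      obtain ⟨K, hK⟩ := hEsmall δ hδ0
      refine ⟨max (M 0) (M K), fun j hj => ?_⟩
      have hj0 : M 0 ≤ j := le_trans (le_max_left _ _) hj
      have hjK : M K ≤ j := le_trans (le_max_right _ _) hj
      have hgK : K ≤ g j := hg2 K j hjK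
      have hd1 : d (z j) (y (g j)) ≤ δ := by
        rw [hsymm]
        exact (hz2 j hj0).le.trans ((hEanti (by omega : K ≤ g j + 2)).trans hK.le)
      have hd2 : d (y (g j)) x ≤ δ := (hyx (g j)).le.trans ((hEanti hgK).trans hK.le)
      have hlt : d (z j) x < t :=
        lt_of_le_of_lt (hΦtri _ _ _) (hδΦ _ _ (hpos _ _) hd1 (hpos _ _) hd2)
      simpa [Real.dist_eq, abs_of_nonneg (hpos (z j) x)] using hlt
    refine ⟨x, ⟨z, hz1, hzconv⟩, ?_⟩
    have := hyx 0
    rwa [hE00] at this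
  -- L2: every point of Ainf is ε-close to each far tail set
  have L2 : ∀ ε > (0:ℝ), ∃ N, ∀ n ≥ N, ∀ x ∈ Ainf, ∃ a ∈ A n, d x a < ε := by
    intro ε hε
    obtain ⟨δ, hδ0, hδΦ⟩ := cont00 ε hε
    obtain ⟨N, hN⟩ := hCauchy (ENNReal.ofReal δ) (ENNReal.ofReal_pos.mpr hδ0)
    refine ⟨N, fun n hn x hx => ?_⟩
    obtain ⟨xk, hxk, hconv⟩ := hx
    have hconv' : Tendsto (fun j => d (xk j) x) atTop (𝓝 0) := hconv
    obtain ⟨j, hj1, hj2⟩ :=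
      ((hconv'.eventually (gt_mem_nhds hδ0)).and (eventually_ge_atTop n)).exists
    obtain ⟨b, hb, hdb⟩ := (aux_hd_lt (hN j (le_trans hn hj2) n hn)).1 (xk j) (hxk j)
    have hdb' : d (xk j) b < δ := (ENNReal.ofReal_lt_ofReal_iff hδ0).mp hdb
    have h2 : d x (xk j) < δ := by rw [hsymm]; exact hj1
    exact ⟨b, hb, lt_of_le_of_lt (hΦtri x b (xk j))
      (hδΦ _ _ (hpos _ _) h2.le (hpos _ _) hdb'.le)⟩
  -- Nonempty
  have hne : Ainf.Nonempty := by
    obtain ⟨N, hN⟩ := L1 1 one_pos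
    obtain ⟨a, ha⟩ := (hA N).1
    obtain ⟨x, hx, -⟩ := hN N le_rfl a ha
    exact ⟨x, hx⟩
  -- Closed
  have hclosed : IsClosedS d Ainf := by
    intro p hp
    by_contra hcon
    push_neg at hcon
    have hq : ∀ k : ℕ, ∃ q, q ∈ Ainf ∧ d q p < 1/((k:ℝ)+1) := by
      intro k
      have hpos' : (0:ℝ) < 1/((k:ℝ)+1) := by positivity
      obtain ⟨q, hq1, hq2⟩ := Set.not_subset.mp (hcon _ hpos')
      exact ⟨q, by simpa using hq2, hq1⟩
    choose q hqA hqd using hq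
    choose u hu1 hu2 using fun k => hqA k
    have hJ : ∀ k, ∃ J, ∀ i ≥ J, d (u k i) (q k) < 1/((k:ℝ)+1) := by
      intro k
      have hconv' : Tendsto (fun i => d (u k i) (q k)) atTop (𝓝 0) := hu2 k
      exact eventually_atTop.mp (hconv'.eventually (gt_mem_nhds (by positivity)))
    choose J hJ using hJ
    set jj : ℕ → ℕ := fun k => Nat.rec (J 0) (fun k jk => max (jk + 1) (J (k+1))) k with hjjdef
    have hjjsucc : ∀ k, jj (k+1) = max (jj k + 1) (J (k+1)) := fun k => rfl
    have hjjlt : ∀ k, jj k < jj (k+1) := fun k => by rw [hjjsucc]; omega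
    have hjjJ : ∀ k, J k ≤ jj k := by
      intro k; cases k with
      | zero => exact le_rfl
      | succ k => rw [hjjsucc]; exact le_trans (le_max_right _ _) le_rfl
    obtain ⟨g, hg1, hg2⟩ := aux_interval_index hjjlt
    have hwex : ∀ i, ∃ w, w ∈ A i ∧ (jj 0 ≤ i → d w (q (g i)) < 1/((g i : ℝ)+1)) := by
      intro i
      by_cases hi : jj 0 ≤ i
      · exact ⟨u (g i) i, hu1 (g i) i,
          fun _ => hJ (g i) i (le_trans (hjjJ (g i)) (hg1 i hi).1)⟩
      · exact ⟨(hA i).1.choose, (hA i).1.choose_spec, fun h => absurd h hi⟩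
    choose w hw1 hw2 using hwex
    have hwt : Tendsto (fun i => d (w i) p) atTop (𝓝 0) := by
      rw [Metric.tendsto_atTop]
      intro t ht
      obtain ⟨δ, hδ0, hδΦ⟩ := cont00 t ht
      obtain ⟨K, hK⟩ : ∃ K : ℕ, 1/((K:ℝ)+1) < δ := by
        obtain ⟨K, hK⟩ := exists_nat_gt (1/δ)
        refine ⟨K, ?_⟩
        rw [div_lt_iff₀ (by positivity)]
        rw [div_lt_iff₀ hδ0] at hK
        nlinarith
      refine ⟨max (jj 0) (jj K), fun i hi => ?_⟩
      have hi0 : jj 0 ≤ i := le_trans (le_max_left _ _) hi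
      have hiK : jj K ≤ i := le_trans (le_max_right _ _) hi
      have hgK : K ≤ g i := hg2 K i hiK
      have hfrac : 1/((g i : ℝ)+1) ≤ δ := by
        have hcast : ((K:ℝ)+1) ≤ ((g i : ℝ)+1) := by
          have : (K:ℝ) ≤ (g i : ℝ) := by exact_mod_cast hgK
          linarith
        have := one_div_le_one_div_of_le (by positivity : (0:ℝ) < (K:ℝ)+1) hcast
        linarith
      have h1 : d (w i) (q (g i)) ≤ δ := le_trans (hw2 i hi0).le hfrac
      have h2 : d (q (g i)) p ≤ δ := le_trans (hqd (g i)).le hfrac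
      have hlt : d (w i) p < t :=
        lt_of_le_of_lt (hΦtri _ _ _) (hδΦ _ _ (hpos _ _) h1 (hpos _ _) h2)
      simpa [Real.dist_eq, abs_of_nonneg (hpos (w i) p)] using hlt
    exact hp ⟨w, hw1, hwt⟩
  -- Bounded
  have hbdd : BoundedS d Ainf := by
    obtain ⟨N, hN⟩ := hCauchy 1 zero_lt_one
    obtain ⟨M0, hM0⟩ := (hA N).2.2
    have hC0 : (0:ℝ) ≤ Φ 1 1 := hΦnn 1 1 zero_le_one zero_le_one
    have hclose : ∀ x ∈ Ainf, ∃ b ∈ A N, d x b ≤ Φ 1 1 := by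
      intro x hx
      obtain ⟨xk, hxk, hconv⟩ := hx
      have hconv' : Tendsto (fun j => d (xk j) x) atTop (𝓝 0) := hconv
      obtain ⟨j, hj1, hj2⟩ :=
        ((hconv'.eventually (gt_mem_nhds one_pos)).and (eventually_ge_atTop N)).exists
      obtain ⟨b, hb, hdb⟩ := (aux_hd_lt (hN j hj2 N le_rfl)).1 (xk j) (hxk j)
      have hdb' : d (xk j) b < 1 := by
        rwa [← ENNReal.ofReal_one, ENNReal.ofReal_lt_ofReal_iff one_pos] at hdb
      refine ⟨b, hb, ?_⟩
      calc d x b ≤ Φ (d x (xk j)) (d (xk j) b) := hΦtri _ _ _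
        _ ≤ Φ 1 1 := mono2 _ _ _ _ (hpos _ _) (by rw [hsymm]; exact hj1.le)
            (hpos _ _) hdb'.le
    refine ⟨Φ (Φ 1 1) (Φ (max M0 0) (Φ 1 1)), fun x hx y hy => ?_⟩
    obtain ⟨bx, hbx, hdx⟩ := hclose x hx
    obtain ⟨cy, hcy, hdy⟩ := hclose y hy
    have h1 : d bx y ≤ Φ (max M0 0) (Φ 1 1) :=
      calc d bx y ≤ Φ (d bx cy) (d cy y) := hΦtri _ _ _
        _ ≤ Φ (max M0 0) (Φ 1 1) := mono2 _ _ _ _ (hpos _ _)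
            (le_trans (hM0 bx hbx cy hcy) (le_max_left _ _)) (hpos _ _)
            (by rw [hsymm]; exact hdy)
    calc d x y ≤ Φ (d x bx) (d bx y) := hΦtri _ _ _
      _ ≤ Φ (Φ 1 1) (Φ (max M0 0) (Φ 1 1)) :=
          mono2 _ _ _ _ (hpos _ _) hdx (hpos _ _) h1
  refine ⟨⟨hne, hclosed, hbdd⟩, ?_⟩
  rw [ENNReal.tendsto_atTop_zero]
  intro e he
  obtain ⟨ε, hε0, hεe⟩ : ∃ ε : ℝ, 0 < ε ∧ ENNReal.ofReal ε ≤ e := by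
    rcases eq_or_ne e ⊤ with rfl | hne'
    · exact ⟨1, one_pos, le_top⟩
    · exact ⟨e.toReal, ENNReal.toReal_pos he.ne' hne', by rw [ENNReal.ofReal_toReal hne']⟩
  obtain ⟨N1, hN1⟩ := L1 ε hε0
  obtain ⟨N2, hN2⟩ := L2 ε hε0
  refine ⟨max N1 N2, fun n hn => ?_⟩
  refine le_trans (sInf_le ?_) hεe
  refine ⟨ENNReal.ofReal_pos.mpr hε0, fun a ha => ?_, fun x hx => ?_⟩
  · obtain ⟨x, hx, hd⟩ := hN1 n (le_trans (le_max_left _ _) hn) a ha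
    exact ⟨x, hx, (ENNReal.ofReal_lt_ofReal_iff hε0).mpr hd⟩
  · obtain ⟨b, hb, hd⟩ := hN2 n (le_trans (le_max_right _ _) hn) x hx
    exact ⟨b, hb, (ENNReal.ofReal_lt_ofReal_iff hε0).mpr hd⟩
end

section
/- If (X,d) is a complete semimetric space with a real-valued upper semicontinuous triangle function Φ, and a sequence (A_n) of nonempty compact subsets converges with respect to the Hausdorff–Pompeiu distance D to a nonempty closed bounded set A, then A is compact; consequently the space (K(X), D) of nonempty compact subsets is complete. -/
open Set Filter Topology ENNReal

open Semimetric
namespace S15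

open Semimetric

variable {X : Type*} {d : X → X → ℝ} {Φ : ℝ → ℝ → ℝ}

lemma reg (husc : UpperSemicontinuousOn (fun p : ℝ × ℝ => Φ p.1 p.2) (Set.Ici 0 ×ˢ Set.Ici 0))
    (h00 : Φ 0 0 = 0) {ε : ℝ} (hε : 0 < ε) :
    ∃ δ : ℝ, 0 < δ ∧ δ ≤ ε ∧ ∀ u v : ℝ, 0 ≤ u → u < δ → 0 ≤ v → v < δ → Φ u v < ε := by
  have h0 : ((0:ℝ), (0:ℝ)) ∈ Set.Ici (0:ℝ) ×ˢ Set.Ici (0:ℝ) :=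
    Set.mk_mem_prod Set.self_mem_Ici Set.self_mem_Ici
  have h := husc _ h0 ε (by simpa [h00] using hε)
  rw [Filter.eventually_iff, Metric.mem_nhdsWithin_iff] at h
  obtain ⟨δ, hδ, hball⟩ := h
  refine ⟨min (δ/2) ε, lt_min (by linarith) hε, min_le_right _ _, ?_⟩
  intro u v hu hud hv hvd
  have hud' : u < δ/2 := lt_of_lt_of_le hud (min_le_left _ _)
  have hvd' : v < δ/2 := lt_of_lt_of_le hvd (min_le_left _ _)
  have hmem : ((u,v) : ℝ × ℝ) ∈ Metric.ball ((0,0) : ℝ × ℝ) δ := by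
    rw [Metric.mem_ball, Prod.dist_eq]
    simp only [Real.dist_eq, sub_zero]
    rw [abs_of_nonneg hu, abs_of_nonneg hv]
    exact max_lt (by linarith) (by linarith)
  exact hball ⟨hmem, Set.mk_mem_prod (Set.mem_Ici.mpr hu) (Set.mem_Ici.mpr hv)⟩

lemma reg' (hpos : ∀ x y, 0 ≤ d x y)
    (htri : ∀ x y z : X, d x y ≤ Φ (d x z) (d z y))
    (husc : UpperSemicontinuousOn (fun p : ℝ × ℝ => Φ p.1 p.2) (Set.Ici 0 ×ˢ Set.Ici 0))
    (h00 : Φ 0 0 = 0) {ε : ℝ} (hε : 0 < ε) :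
    ∃ δ : ℝ, 0 < δ ∧ δ ≤ ε ∧ ∀ x z y : X, d x z < δ → d z y < δ → d x y < ε := by
  obtain ⟨δ, hδ, hδε, hΦ⟩ := reg husc h00 hε
  exact ⟨δ, hδ, hδε, fun x z y h1 h2 =>
    lt_of_le_of_lt (htri x y z) (hΦ _ _ (hpos _ _) h1 (hpos _ _) h2)⟩

/-- A chain of moduli for iterated triangle estimates. -/
lemma chain (hpos : ∀ x y, 0 ≤ d x y)
    (htri : ∀ x y z : X, d x y ≤ Φ (d x z) (d z y))
    (husc : UpperSemicontinuousOn (fun p : ℝ × ℝ => Φ p.1 p.2) (Set.Ici 0 ×ˢ Set.Ici 0))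
    (h00 : Φ 0 0 = 0) {ε : ℝ} (hε : 0 < ε) :
    ∃ δ : ℕ → ℝ, δ 0 = ε ∧ (∀ k, 0 < δ k) ∧ (∀ k, δ (k+1) ≤ δ k / 2) ∧
      (∀ k, ∀ x z y : X, d x z < δ (k+1) → d z y < δ (k+1) → d x y < δ k) := by
  have F : ∀ t : ℝ, 0 < t →
      ∃ δ, 0 < δ ∧ δ ≤ t ∧ ∀ x z y : X, d x z < δ → d z y < δ → d x y < t :=
    fun t ht => reg' hpos htri husc h00 ht
  choose! f hf1 hf2 hf3 using F
  set δ : ℕ → ℝ := fun k => Nat.rec ε (fun _ prev => min (f prev) (prev/2)) k with hδdef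
  have hpos' : ∀ k, 0 < δ k := by
    intro k
    induction k with
    | zero => exact hε
    | succ k ih => exact lt_min (hf1 _ ih) (by linarith)
  refine ⟨δ, rfl, hpos', fun k => min_le_right _ _, ?_⟩
  intro k x z y h1 h2
  have hle : δ (k+1) ≤ f (δ k) := min_le_left _ _
  exact hf3 (δ k) (hpos' k) x z y (lt_of_lt_of_le h1 hle) (lt_of_lt_of_le h2 hle)

lemma chain_anti {δ : ℕ → ℝ} (hp : ∀ k, 0 < δ k) (hh : ∀ k, δ (k+1) ≤ δ k / 2) :
    ∀ j k, j ≤ k → δ k ≤ δ j := by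
  have : ∀ n, δ (n+1) ≤ δ n := fun n => le_trans (hh n) (by linarith [hp n])
  intro j k hjk
  exact antitone_nat_of_succ_le this hjk

lemma chain_small {δ : ℕ → ℝ} (hp : ∀ k, 0 < δ k) (hh : ∀ k, δ (k+1) ≤ δ k / 2)
    {ε' : ℝ} (hε' : 0 < ε') : ∃ k, δ k < ε' := by
  have hb : ∀ k, δ k ≤ δ 0 / 2 ^ k := by
    intro k
    induction k with
    | zero => simp
    | succ k ih =>
      have := hh k
      have h2 : δ k / 2 ≤ δ 0 / 2 ^ k / 2 := by linarith
      calc δ (k+1) ≤ δ k / 2 := hh k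
        _ ≤ δ 0 / 2 ^ k / 2 := h2
        _ = δ 0 / 2 ^ (k+1) := by ring
  obtain ⟨k, hk⟩ := pow_unbounded_of_one_lt (δ 0 / ε') (one_lt_two (α := ℝ))
  refine ⟨k, lt_of_le_of_lt (hb k) ?_⟩
  rw [div_lt_iff₀ (by positivity)]
  rw [div_lt_iff₀ hε'] at hk
  linarith [hk]

lemma convTo_iff (hpos : ∀ x y, 0 ≤ d x y) (y : ℕ → X) (p : X) :
    ConvTo d y p ↔ ∀ ε > (0:ℝ), ∃ N, ∀ n ≥ N, d (y n) p < ε := by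
  unfold ConvTo
  rw [Metric.tendsto_atTop]
  apply forall_congr'; intro ε
  apply imp_congr Iff.rfl
  apply exists_congr; intro N
  apply forall_congr'; intro n
  apply imp_congr Iff.rfl
  rw [Real.dist_eq, sub_zero, abs_of_nonneg (hpos _ _)]

lemma chain_pairs {δ : ℕ → ℝ} (hp : ∀ k, 0 < δ k)
    (hstep : ∀ k, ∀ x z y : X, d x z < δ (k+1) → d z y < δ (k+1) → d x y < δ k)
    (hd0 : ∀ x : X, d x x = 0)
    (y : ℕ → X) (hy : ∀ i, d (y i) (y (i+1)) < δ (i+2)) :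
    ∀ j k, d (y k) (y (k+j)) < δ (k+1) := by
  intro j
  induction j with
  | zero => intro k; simpa [hd0] using hp (k+1)
  | succ j ih =>
    intro k
    have h1 : d (y k) (y (k+1)) < δ (k+2) := hy k
    have h2 : d (y (k+1)) (y (k+1+j)) < δ (k+2) := ih (k+1)
    have h3 := hstep (k+1) (y k) (y (k+1)) (y (k+1+j)) h1 h2
    have he : k + 1 + j = k + (j + 1) := by omega
    rwa [he] at h3

lemma chain_limit (hpos : ∀ x y, 0 ≤ d x y) (hsymm : ∀ x y, d x y = d y x)
    (hzero : ∀ x y, d x y = 0 ↔ x = y) (hcomplete : IsCompleteS d)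
    {δ : ℕ → ℝ} (hp : ∀ k, 0 < δ k) (hh : ∀ k, δ (k+1) ≤ δ k / 2)
    (hstep : ∀ k, ∀ x z y : X, d x z < δ (k+1) → d z y < δ (k+1) → d x y < δ k)
    (y : ℕ → X) (hy : ∀ i, d (y i) (y (i+1)) < δ (i+2)) :
    ∃ p, ConvTo d y p ∧ d (y 0) p < δ 0 := by
  have hd0 : ∀ x : X, d x x = 0 := fun x => (hzero x x).mpr rfl
  have hpairs := chain_pairs hp hstep hd0 y hy
  have hcau : IsCauchyS d y := by
    intro ε' hε'
    obtain ⟨k, hk⟩ := chain_small hp hh hε'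
    refine ⟨k, ?_⟩
    intro m hm n hn
    rcases le_total m n with h | h
    · obtain ⟨j, rfl⟩ := Nat.exists_eq_add_of_le h
      calc d (y m) (y (m+j)) < δ (m+1) := hpairs j m
        _ ≤ δ k := chain_anti hp hh k (m+1) (by omega)
        _ < ε' := hk
    · obtain ⟨j, rfl⟩ := Nat.exists_eq_add_of_le h
      rw [hsymm]
      calc d (y n) (y (n+j)) < δ (n+1) := hpairs j n
        _ ≤ δ k := chain_anti hp hh k (n+1) (by omega)
        _ < ε' := hk
  obtain ⟨p, hconv⟩ := hcomplete y hcau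
  refine ⟨p, hconv, ?_⟩
  obtain ⟨N, hN⟩ := (convTo_iff hpos y p).mp hconv (δ 1) (hp 1)
  have h1 : d (y 0) (y N) < δ 1 := by
    have := hpairs N 0
    simpa using this
  exact hstep 0 (y 0) (y N) p h1 (hN N le_rfl)

lemma mem_closed_of_convTo {L : Set X} {x : ℕ → X} {p : X} (hL : IsClosedS d L)
    (hpos : ∀ x y, 0 ≤ d x y)
    (hx : ∀ k, x k ∈ L) (h : ConvTo d x p) : p ∈ L := by
  by_contra hp
  obtain ⟨r, hr, hball⟩ := hL p hp
  obtain ⟨N, hN⟩ := (convTo_iff hpos x p).mp h r hr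
  exact hball (hN N le_rfl) (hx N)

end S15

namespace S15

open Set Filter Topology ENNReal Semimetric

variable {X : Type*} {d : X → X → ℝ} {Φ : ℝ → ℝ → ℝ}

lemma HD_le (hpos : ∀ x y, 0 ≤ d x y) {A B : Set X} {r : ℝ} (hr : 0 < r)
    (h1 : ∀ a ∈ A, ∃ b ∈ B, d a b < r) (h2 : ∀ b ∈ B, ∃ a ∈ A, d b a < r) :
    HD d A B ≤ ENNReal.ofReal r := by
  apply sInf_le
  refine ⟨ENNReal.ofReal_pos.mpr hr, ?_, ?_⟩
  · intro a ha
    obtain ⟨b, hb, hd⟩ := h1 a ha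
    exact ⟨b, hb, (ENNReal.ofReal_lt_ofReal_iff hr).mpr hd⟩
  · intro b hb
    obtain ⟨a, ha, hd⟩ := h2 b hb
    exact ⟨a, ha, (ENNReal.ofReal_lt_ofReal_iff hr).mpr hd⟩

lemma HD_lt (hpos : ∀ x y, 0 ≤ d x y) {A B : Set X} {r : ℝ}
    (h : HD d A B < ENNReal.ofReal r) :
    (∀ a ∈ A, ∃ b ∈ B, d a b < r) ∧ (∀ b ∈ B, ∃ a ∈ A, d b a < r) := by
  obtain ⟨ε', ⟨hε0, hc1, hc2⟩, hlt⟩ := sInf_lt_iff.mp h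
  constructor
  · intro a ha
    obtain ⟨b, hb, hd⟩ := hc1 a ha
    exact ⟨b, hb, (ENNReal.ofReal_lt_ofReal_iff_of_nonneg (hpos a b)).mp (lt_trans hd hlt)⟩
  · intro b hb
    obtain ⟨a, ha, hd⟩ := hc2 b hb
    exact ⟨a, ha, (ENNReal.ofReal_lt_ofReal_iff_of_nonneg (hpos b a)).mp (lt_trans hd hlt)⟩

/-- Internal notion of total boundedness with a finite set of centers. -/
def TB (d : X → X → ℝ) (H : Set X) : Prop :=
  ∀ ε > (0:ℝ), ∃ P : Set X, P.Finite ∧ H ⊆ ⋃ p ∈ P, Ball d p ε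

lemma compact_TB (hpos : ∀ x y, 0 ≤ d x y)
    (hzero : ∀ x y, d x y = 0 ↔ x = y)
    (htri : ∀ x y z : X, d x y ≤ Φ (d x z) (d z y))
    (husc : UpperSemicontinuousOn (fun p : ℝ × ℝ => Φ p.1 p.2) (Set.Ici 0 ×ˢ Set.Ici 0))
    (h00 : Φ 0 0 = 0) {H : Set X} (hc : IsCompactS d H) : TB d H := by
  rcases isEmpty_or_nonempty X with hX | hX
  · exact fun ε hε => ⟨∅, Set.finite_empty, fun x _ => (IsEmpty.false x).elim⟩
  intro ε hε
  set Ux : X → Set X := fun x => {y | ∃ r > (0:ℝ), ∀ z, d z y < r → d z x < ε} with hUx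
  have hopen : ∀ x, IsOpenS d (Ux x) := by
    intro x y hy
    obtain ⟨r, hr, hrx⟩ := hy
    obtain ⟨δr, hδr, _, hreg⟩ := reg' hpos htri husc h00 hr
    refine ⟨δr, hδr, ?_⟩
    intro z hz
    refine ⟨δr, hδr, ?_⟩
    intro w hw
    exact hrx w (hreg w z y hw hz)
  have hmem : ∀ x, x ∈ Ux x := fun x => ⟨ε, hε, fun z hz => hz⟩
  have hsub : ∀ x, Ux x ⊆ Ball d x ε := by
    intro x y hy
    obtain ⟨r, hr, hrx⟩ := hy
    have : d y y < r := by rw [(hzero y y).mpr rfl]; exact hr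
    exact hrx y this
  obtain ⟨F, hFC, hFfin, hFcov⟩ := hc (Ux '' H)
    (by rintro U ⟨x, _, rfl⟩; exact hopen x)
    (fun x hx => ⟨Ux x, ⟨x, hx, rfl⟩, hmem x⟩)
  have hsel : ∀ U ∈ F, ∃ x, U ⊆ Ball d x ε := by
    intro U hU
    obtain ⟨x, _, rfl⟩ := hFC hU
    exact ⟨x, hsub x⟩
  choose! g hg using hsel
  refine ⟨g '' F, hFfin.image g, ?_⟩
  intro x hx
  obtain ⟨U, hU, hxU⟩ := hFcov hx
  exact Set.mem_biUnion (Set.mem_image_of_mem g hU) (hg U hU hxU)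

lemma limit_TB (hpos : ∀ x y, 0 ≤ d x y) (hsymm : ∀ x y, d x y = d y x)
    (hzero : ∀ x y, d x y = 0 ↔ x = y)
    (htri : ∀ x y z : X, d x y ≤ Φ (d x z) (d z y))
    (husc : UpperSemicontinuousOn (fun p : ℝ × ℝ => Φ p.1 p.2) (Set.Ici 0 ×ˢ Set.Ici 0))
    (h00 : Φ 0 0 = 0) {A : ℕ → Set X} {L : Set X}
    (hA : ∀ n, IsCompactS d (A n))
    (hconv : Tendsto (fun n => HD d (A n) L) atTop (nhds 0)) : TB d L := by
  intro ε hε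
  obtain ⟨δ, hδ, hδε, hreg⟩ := reg' hpos htri husc h00 hε
  have h2 : ∃ n, HD d (A n) L < ENNReal.ofReal δ := by
    have := (ENNReal.tendsto_nhds_zero.mp hconv (ENNReal.ofReal (δ/2))
      (ENNReal.ofReal_pos.mpr (by linarith))).exists
    obtain ⟨n, hn⟩ := this
    exact ⟨n, lt_of_le_of_lt hn ((ENNReal.ofReal_lt_ofReal_iff hδ).mpr (by linarith))⟩
  obtain ⟨n, hn⟩ := h2
  have happ := (HD_lt hpos hn).2
  obtain ⟨P, hPfin, hPcov⟩ := compact_TB hpos hzero htri husc h00 (hA n) δ hδ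
  refine ⟨P, hPfin, ?_⟩
  intro b hb
  obtain ⟨a, ha, hba⟩ := happ b hb
  obtain ⟨p, hp, hap⟩ := Set.mem_iUnion₂.mp (hPcov ha)
  exact Set.mem_biUnion hp (hreg b a p hba hap)

lemma pigeonhole (hpos : ∀ x y, 0 ≤ d x y) (hsymm : ∀ x y, d x y = d y x)
    (htri : ∀ x y z : X, d x y ≤ Φ (d x z) (d z y))
    (husc : UpperSemicontinuousOn (fun p : ℝ × ℝ => Φ p.1 p.2) (Set.Ici 0 ×ˢ Set.Ici 0))
    (h00 : Φ 0 0 = 0) {L : Set X} (hTB : TB d L)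
    (x : ℕ → X) (hx : ∀ k, x k ∈ L) {ε : ℝ} (hε : 0 < ε)
    {S : Set ℕ} (hS : S.Infinite) :
    ∃ T ⊆ S, T.Infinite ∧ ∀ i ∈ T, ∀ j ∈ T, d (x i) (x j) < ε := by
  obtain ⟨δ, hδ, hδε, hreg⟩ := reg' hpos htri husc h00 hε
  obtain ⟨P, hPfin, hPcov⟩ := hTB δ hδ
  have key : ∃ p ∈ P, {k ∈ S | d (x k) p < δ}.Infinite := by
    by_contra h
    push_neg at h
    have : S ⊆ ⋃ p ∈ P, {k ∈ S | d (x k) p < δ} := by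
      intro k hk
      obtain ⟨p, hp, hkp⟩ := Set.mem_iUnion₂.mp (hPcov (hx k))
      exact Set.mem_biUnion hp ⟨hk, hkp⟩
    exact hS (Set.Finite.subset (Set.Finite.biUnion hPfin
      (fun p hp => h p hp)) this)
  obtain ⟨p, _, hfib⟩ := key
  refine ⟨{k ∈ S | d (x k) p < δ}, fun k hk => hk.1, hfib, ?_⟩
  intro i hi j hj
  have h2 : d p (x j) < δ := by rw [← hsymm]; exact hj.2
  exact hreg (x i) p (x j) hi.2 h2

lemma seq_compact (hpos : ∀ x y, 0 ≤ d x y) (hsymm : ∀ x y, d x y = d y x)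
    (hzero : ∀ x y, d x y = 0 ↔ x = y) (hcomplete : IsCompleteS d)
    (htri : ∀ x y z : X, d x y ≤ Φ (d x z) (d z y))
    (husc : UpperSemicontinuousOn (fun p : ℝ × ℝ => Φ p.1 p.2) (Set.Ici 0 ×ˢ Set.Ici 0))
    (h00 : Φ 0 0 = 0) {L : Set X} (hTB : TB d L) (hL : IsClosedS d L)
    (x : ℕ → X) (hx : ∀ k, x k ∈ L) :
    ∃ n : ℕ → ℕ, StrictMono n ∧ ∃ p ∈ L, ConvTo d (fun k => x (n k)) p := by
  obtain ⟨δ, hδ0, hδpos, hδhalf, _⟩ := chain hpos htri husc h00 one_pos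
  have step : ∀ (k : ℕ) (S : Set ℕ), S.Infinite →
      ∃ T ⊆ S, T.Infinite ∧ ∀ i ∈ T, ∀ j ∈ T, d (x i) (x j) < δ k :=
    fun k S hS => pigeonhole hpos hsymm htri husc h00 hTB x hx (hδpos k) hS
  choose! G hG1 hG2 hG3 using step
  set T : ℕ → Set ℕ := fun k => Nat.rec Set.univ (fun k prev => G (k+1) prev) k with hT
  have hTinf : ∀ k, (T k).Infinite := by
    intro k
    induction k with
    | zero => exact Set.infinite_univ
    | succ k ih => exact hG2 (k+1) (T k) ih
  have hTsub : ∀ k, T (k+1) ⊆ T k := fun k => hG1 (k+1) (T k) (hTinf k)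
  have hTpair : ∀ k, ∀ i ∈ T (k+1), ∀ j ∈ T (k+1), d (x i) (x j) < δ (k+1) :=
    fun k => hG3 (k+1) (T k) (hTinf k)
  have hTnest : ∀ j k, j ≤ k → T k ⊆ T j := by
    intro j k hjk
    induction hjk with
    | refl => exact fun a ha => ha
    | step h ih => exact fun a ha => ih (hTsub _ ha)
  -- build the strictly monotone selection
  have hpick : ∀ (k : ℕ) (m : ℕ), ∃ l ∈ T k, m < l := fun k m => (hTinf k).exists_gt m
  choose! pick hpick1 hpick2 using hpick
  set n : ℕ → ℕ := fun k => Nat.rec (pick 0 0) (fun k prev => pick (k+1) prev) k with hn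
  have hnT : ∀ k, n k ∈ T k := by
    intro k
    induction k with
    | zero => exact hpick1 0 0
    | succ k _ => exact hpick1 (k+1) (n k)
  have hmono : StrictMono n := strictMono_nat_of_lt_succ (fun k => hpick2 (k+1) (n k))
  have hcau : IsCauchyS d (fun k => x (n k)) := by
    intro ε' hε'
    obtain ⟨k, hk⟩ := chain_small hδpos hδhalf hε'
    refine ⟨k + 1, ?_⟩
    intro m₁ hm₁ m₂ hm₂
    have h1 : n m₁ ∈ T (k+1) := hTnest (k+1) m₁ hm₁ (hnT m₁)
    have h2 : n m₂ ∈ T (k+1) := hTnest (k+1) m₂ hm₂ (hnT m₂)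
    have := hTpair k (n m₁) h1 (n m₂) h2
    have hlast : δ (k+1) ≤ δ k := chain_anti hδpos hδhalf k (k+1) (by omega)
    linarith
  obtain ⟨p, hp⟩ := hcomplete _ hcau
  exact ⟨n, hmono, p, mem_closed_of_convTo hL hpos (fun k => hx (n k)) hp, hp⟩

end S15

namespace S15

open Set Filter Topology ENNReal Semimetric

variable {X : Type*} {d : X → X → ℝ} {Φ : ℝ → ℝ → ℝ}

lemma lebesgue (hpos : ∀ x y, 0 ≤ d x y) (hsymm : ∀ x y, d x y = d y x)
    (hzero : ∀ x y, d x y = 0 ↔ x = y) (hcomplete : IsCompleteS d)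
    (htri : ∀ x y z : X, d x y ≤ Φ (d x z) (d z y))
    (husc : UpperSemicontinuousOn (fun p : ℝ × ℝ => Φ p.1 p.2) (Set.Ici 0 ×ˢ Set.Ici 0))
    (h00 : Φ 0 0 = 0) {L : Set X} (hTB : TB d L) (hL : IsClosedS d L)
    {C : Set (Set X)} (hC : ∀ U ∈ C, IsOpenS d U) (hcov : L ⊆ ⋃₀ C) :
    ∃ δ > (0:ℝ), ∀ x ∈ L, ∃ U ∈ C, Ball d x δ ⊆ U := by
  by_contra h
  push_neg at h
  have h' : ∀ m : ℕ, ∃ x ∈ L, ∀ U ∈ C, ¬ Ball d x (1/(m+1)) ⊆ U := by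
    intro m
    obtain ⟨x, hxL, hx⟩ := h (1/(m+1)) (by positivity)
    exact ⟨x, hxL, hx⟩
  choose! x hxL hx using h'
  obtain ⟨n, hmono, p, hpL, hconv⟩ :=
    seq_compact hpos hsymm hzero hcomplete htri husc h00 hTB hL x hxL
  obtain ⟨U, hU, hpU⟩ := hcov hpL
  obtain ⟨r, hr, hball⟩ := hC U hU p hpU
  obtain ⟨δr, hδr, _, hreg⟩ := reg' hpos htri husc h00 hr
  obtain ⟨N₁, hN₁⟩ := (convTo_iff hpos _ p).mp hconv δr hδr
  obtain ⟨N₂, hN₂⟩ := exists_nat_one_div_lt hδr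
  set k := max N₁ N₂ with hk
  have hd1 : d (x (n k)) p < δr := hN₁ k (le_max_left _ _)
  have hd2 : (1 : ℝ)/(n k + 1) < δr := by
    have hk2 : (N₂ : ℝ) + 1 ≤ (n k : ℝ) + 1 := by
      have : N₂ ≤ n k := le_trans (le_max_right N₁ N₂) (le_trans hmono.le_apply le_rfl)
      exact_mod_cast by omega
    calc (1:ℝ)/(n k + 1) ≤ 1/(N₂+1) := by
          apply one_div_le_one_div_of_le (by positivity) hk2
      _ < δr := hN₂
  apply hx (n k) U hU
  intro y hy
  apply hball
  have hy' : d y (x (n k)) < δr := lt_trans hy hd2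
  exact hreg y (x (n k)) p hy' hd1

lemma part1 (hpos : ∀ x y, 0 ≤ d x y) (hsymm : ∀ x y, d x y = d y x)
    (hzero : ∀ x y, d x y = 0 ↔ x = y) (hcomplete : IsCompleteS d)
    (htri : ∀ x y z : X, d x y ≤ Φ (d x z) (d z y))
    (husc : UpperSemicontinuousOn (fun p : ℝ × ℝ => Φ p.1 p.2) (Set.Ici 0 ×ˢ Set.Ici 0))
    (h00 : Φ 0 0 = 0) {A : ℕ → Set X} {L : Set X}
    (hA : ∀ n, IsCompactS d (A n)) (hL : IsClosedS d L)
    (hconv : Tendsto (fun n => HD d (A n) L) atTop (nhds 0)) :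
    IsCompactS d L := by
  have hTB : TB d L := limit_TB hpos hsymm hzero htri husc h00 hA hconv
  intro C hC hcov
  obtain ⟨δ, hδ, hleb⟩ := lebesgue hpos hsymm hzero hcomplete htri husc h00 hTB hL hC hcov
  obtain ⟨δ', hδ', _, hreg⟩ := reg' hpos htri husc h00 hδ
  obtain ⟨P, hPfin, hPcov⟩ := hTB δ' hδ'
  have hsel : ∀ p : X, (Ball d p δ' ∩ L).Nonempty → ∃ U ∈ C, Ball d p δ' ⊆ U := by
    rintro p ⟨q, hqB, hqL⟩
    obtain ⟨U, hU, hBU⟩ := hleb q hqL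
    refine ⟨U, hU, ?_⟩
    intro y hy
    apply hBU
    have hpq : d p q < δ' := by rw [hsymm]; exact hqB
    exact hreg y p q hy hpq
  choose! g hgC hgB using hsel
  refine ⟨g '' {p ∈ P | (Ball d p δ' ∩ L).Nonempty}, ?_, ?_, ?_⟩
  · rintro U ⟨p, hp, rfl⟩
    exact hgC p hp.2
  · exact (hPfin.subset (Set.sep_subset _ _)).image g
  · intro b hb
    obtain ⟨p, hp, hbp⟩ := Set.mem_iUnion₂.mp (hPcov hb)
    have hne : (Ball d p δ' ∩ L).Nonempty := ⟨b, hbp, hb⟩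
    exact ⟨g p, Set.mem_image_of_mem g ⟨hp, hne⟩, hgB p hne hbp⟩

end S15

namespace S15

open Set Filter Topology ENNReal Semimetric

variable {X : Type*} {d : X → X → ℝ} {Φ : ℝ → ℝ → ℝ}

/-- The candidate limit set: points approximable by the tails of `A`. -/
def setL (d : X → X → ℝ) (A : ℕ → Set X) : Set X :=
  {p | ∀ N : ℕ, ∀ r > (0:ℝ), ∃ n ≥ N, ∃ a ∈ A n, d a p < r}

lemma setL_closed (hpos : ∀ x y, 0 ≤ d x y)
    (htri : ∀ x y z : X, d x y ≤ Φ (d x z) (d z y))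
    (husc : UpperSemicontinuousOn (fun p : ℝ × ℝ => Φ p.1 p.2) (Set.Ici 0 ×ˢ Set.Ici 0))
    (h00 : Φ 0 0 = 0) (A : ℕ → Set X) : IsClosedS d (setL d A) := by
  intro p hp
  rw [Set.mem_compl_iff, setL, Set.mem_setOf_eq] at hp
  push_neg at hp
  obtain ⟨N, r, hr, hfar⟩ := hp
  obtain ⟨δ, hδ, _, hreg⟩ := reg' hpos htri husc h00 hr
  refine ⟨δ, hδ, ?_⟩
  intro y hy hyL
  obtain ⟨n, hn, a, ha, hd⟩ := hyL N δ hδ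
  exact absurd (hreg a y p hd hy) (not_lt.mpr (hfar n hn a ha))

lemma approx1 (hpos : ∀ x y, 0 ≤ d x y) (hsymm : ∀ x y, d x y = d y x)
    (hzero : ∀ x y, d x y = 0 ↔ x = y) (hcomplete : IsCompleteS d)
    (htri : ∀ x y z : X, d x y ≤ Φ (d x z) (d z y))
    (husc : UpperSemicontinuousOn (fun p : ℝ × ℝ => Φ p.1 p.2) (Set.Ici 0 ×ˢ Set.Ici 0))
    (h00 : Φ 0 0 = 0) {A : ℕ → Set X}
    (hcauchy : ∀ ε : ℝ≥0∞, 0 < ε → ∃ N, ∀ m ≥ N, ∀ n ≥ N, HD d (A m) (A n) < ε)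
    {ε : ℝ} (hε : 0 < ε) :
    ∃ N, ∀ n ≥ N, ∀ a ∈ A n, ∃ p ∈ setL d A, d a p < ε := by
  obtain ⟨δ, hδ0, hδpos, hδhalf, hδstep⟩ := chain hpos htri husc h00 hε
  have hidx : ∀ k : ℕ, ∃ N, ∀ m ≥ N, ∀ n ≥ N, HD d (A m) (A n) < ENNReal.ofReal (δ (k+2)) :=
    fun k => hcauchy _ (ENNReal.ofReal_pos.mpr (hδpos (k+2)))
  choose Nk hNk using hidx
  set M : ℕ → ℕ := fun k => Nat.rec (Nk 0) (fun k prev => max prev (Nk (k+1))) k with hM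
  have hMN : ∀ k, Nk k ≤ M k := by
    intro k
    cases k with
    | zero => exact le_rfl
    | succ k => exact le_max_right _ _
  have hMmono : ∀ k, M k ≤ M (k+1) := fun k => le_max_left _ _
  refine ⟨M 0, ?_⟩
  intro n hn a ha
  set m : ℕ → ℕ := fun k => Nat.rec n (fun k prev => max (prev+1) (M (k+1))) k with hm
  have hmM : ∀ k, M k ≤ m k := by
    intro k
    cases k with
    | zero => exact hn
    | succ k => exact le_max_right _ _
  have hmsucc : ∀ k, m k < m (k+1) :=
    fun k => lt_of_lt_of_le (Nat.lt_succ_self _) (le_max_left _ _)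
  have hHD : ∀ k, HD d (A (m k)) (A (m (k+1))) < ENNReal.ofReal (δ (k+2)) := by
    intro k
    exact hNk k (m k) (le_trans (hMN k) (hmM k)) (m (k+1))
      (le_trans (hMN k) (le_trans (hMmono k) (hmM (k+1))))
  have hsel : ∀ k, ∀ a' ∈ A (m k), ∃ b ∈ A (m (k+1)), d a' b < δ (k+2) :=
    fun k => (HD_lt hpos (hHD k)).1
  set Y : (k : ℕ) → {z : X // z ∈ A (m k)} :=
    fun k => Nat.rec ⟨a, ha⟩ (fun k prev =>
      ⟨Classical.choose (hsel k prev.1 prev.2),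
       (Classical.choose_spec (hsel k prev.1 prev.2)).1⟩) k with hY
  have hYd : ∀ k, d ((Y k) : X) ((Y (k+1)) : X) < δ (k+2) :=
    fun k => (Classical.choose_spec (hsel k (Y k).1 (Y k).2)).2
  obtain ⟨p, hconv, hd0⟩ := chain_limit hpos hsymm hzero hcomplete hδpos hδhalf hδstep
    (fun k => ((Y k) : X)) hYd
  have hm_ge : ∀ k, k ≤ m k := by
    intro k
    induction k with
    | zero => exact Nat.zero_le _
    | succ k ih => exact le_trans (Nat.succ_le_succ ih) (le_max_left _ _)
  have hpL : p ∈ setL d A := by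
    intro N r hr
    obtain ⟨N', hN'⟩ := (convTo_iff hpos _ p).mp hconv r hr
    exact ⟨m (max N N'), le_trans (le_max_left N N') (hm_ge _), (Y (max N N')).1,
      (Y (max N N')).2, hN' (max N N') (le_max_right _ _)⟩
  exact ⟨p, hpL, hδ0 ▸ hd0⟩

lemma approx2 (hpos : ∀ x y, 0 ≤ d x y) (hsymm : ∀ x y, d x y = d y x)
    (htri : ∀ x y z : X, d x y ≤ Φ (d x z) (d z y))
    (husc : UpperSemicontinuousOn (fun p : ℝ × ℝ => Φ p.1 p.2) (Set.Ici 0 ×ˢ Set.Ici 0))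
    (h00 : Φ 0 0 = 0) {A : ℕ → Set X}
    (hcauchy : ∀ ε : ℝ≥0∞, 0 < ε → ∃ N, ∀ m ≥ N, ∀ n ≥ N, HD d (A m) (A n) < ε)
    {ε : ℝ} (hε : 0 < ε) :
    ∃ N, ∀ n ≥ N, ∀ b ∈ setL d A, ∃ a ∈ A n, d b a < ε := by
  obtain ⟨δ, hδ, _, hreg⟩ := reg' hpos htri husc h00 hε
  obtain ⟨N, hN⟩ := hcauchy (ENNReal.ofReal δ) (ENNReal.ofReal_pos.mpr hδ)
  refine ⟨N, ?_⟩
  intro n hn b hb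
  obtain ⟨m, hm, a', ha', hd⟩ := hb N δ hδ
  obtain ⟨a, ha, hd2⟩ := (HD_lt hpos (hN m hm n hn)).1 a' ha'
  have h1 : d b a' < δ := by rw [hsymm]; exact hd
  exact ⟨a, ha, hreg b a' a h1 hd2⟩

end S15

/-- D-limits of compact sets are compact, and (K(X), D) is complete. -/
theorem statement15 {X : Type*} (d : X → X → ℝ)
    (hpos : ∀ x y, 0 ≤ d x y) (hsymm : ∀ x y, d x y = d y x)
    (hzero : ∀ x y, d x y = 0 ↔ x = y)
    (hcomplete : IsCompleteS d)
    (Φ : ℝ → ℝ → ℝ) (hΦ : IsTriangleFunR d Φ)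
    (husc : UpperSemicontinuousOn (fun p : ℝ × ℝ => Φ p.1 p.2) (Set.Ici 0 ×ˢ Set.Ici 0)) :
    (∀ (A : ℕ → Set X) (L : Set X),
        (∀ n, (A n).Nonempty ∧ IsCompactS d (A n)) →
        (L.Nonempty ∧ IsClosedS d L ∧ BoundedS d L) →
        Tendsto (fun n => HD d (A n) L) atTop (nhds 0) →
        IsCompactS d L) ∧
    (∀ A : ℕ → Set X,
        (∀ n, (A n).Nonempty ∧ IsCompactS d (A n)) →
        (∀ ε : ℝ≥0∞, 0 < ε → ∃ N, ∀ m ≥ N, ∀ n ≥ N, HD d (A m) (A n) < ε) →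
        ∃ L : Set X, L.Nonempty ∧ IsCompactS d L ∧
          Tendsto (fun n => HD d (A n) L) atTop (nhds 0)) := by
  obtain ⟨hΦsymm, hΦmono, hΦnonneg, h00, htri⟩ := hΦ
  constructor
  · intro A L hA hL hconv
    exact S15.part1 hpos hsymm hzero hcomplete htri husc h00 (fun n => (hA n).2) hL.2.1 hconv
  · intro A hA hcauchy
    set L := S15.setL d A with hLdef
    have hLclosed : IsClosedS d L := S15.setL_closed hpos htri husc h00 A
    -- nonemptiness
    obtain ⟨N₁, hN₁⟩ := S15.approx1 hpos hsymm hzero hcomplete htri husc h00 hcauchy one_pos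
    obtain ⟨a₀, ha₀⟩ := (hA N₁).1
    obtain ⟨p₀, hp₀, _⟩ := hN₁ N₁ le_rfl a₀ ha₀
    have hLne : L.Nonempty := ⟨p₀, hp₀⟩
    -- convergence HD (A n) L → 0
    have htend : Tendsto (fun n => HD d (A n) L) atTop (nhds 0) := by
      rw [ENNReal.tendsto_nhds_zero]
      intro ε hε
      have hrex : ∃ r : ℝ, 0 < r ∧ ENNReal.ofReal r ≤ ε := by
        by_cases htop : ε = ⊤
        · exact ⟨1, one_pos, by simp [htop]⟩
        · refine ⟨ε.toReal, ENNReal.toReal_pos (ne_of_gt hε) htop, ?_⟩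
          rw [ENNReal.ofReal_toReal htop]
      obtain ⟨r, hr, hrε⟩ := hrex
      obtain ⟨Na, hNa⟩ := S15.approx1 hpos hsymm hzero hcomplete htri husc h00 hcauchy hr
      obtain ⟨Nb, hNb⟩ := S15.approx2 hpos hsymm htri husc h00 hcauchy hr
      filter_upwards [eventually_ge_atTop (max Na Nb)] with n hn
      have h1 : ∀ a ∈ A n, ∃ b ∈ L, d a b < r :=
        hNa n (le_trans (le_max_left _ _) hn)
      have h2 : ∀ b ∈ L, ∃ a ∈ A n, d b a < r :=
        hNb n (le_trans (le_max_right _ _) hn)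
      exact le_trans (S15.HD_le hpos hr h1 h2) hrε
    exact ⟨L, hLne,
      S15.part1 hpos hsymm hzero hcomplete htri husc h00 (fun n => (hA n).2) hLclosed htend,
      htend⟩
end

section
/- Let T be a φ-contraction on a complete regular semimetric space (X,d) with triangle function Φ, and let x₀ be its unique fixed point. Then for all x ∈ X, d(x, x₀) ≤ ψ(d(x, T(x))), where ψ(t) := sup{ s ≥ 0 : s ≤ Φ(t, φ(s)) }. -/
open Set Filter Topology ENNReal

open Semimetric
/-- error estimate via ψ for the distance to the fixed point. -/
theorem statement16 {X : Type*} (d : X → X → ℝ)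
    (hpos : ∀ x y, 0 ≤ d x y) (hsymm : ∀ x y, d x y = d y x)
    (hzero : ∀ x y, d x y = 0 ↔ x = y)
    (hcomplete : IsCompleteS d)
    (Φ : ℝ → ℝ → ℝ≥0∞) (hΦ : IsTriangleFun d Φ) (hreg : RegularAt00 Φ)
    (φ : ℝ → ℝ) (hφ : IsComparison φ)
    (T : X → X) (hT : IsContraction d φ T)
    (x₀ : X) (hfix : T x₀ = x₀) :
    ∀ x : X, ENNReal.ofReal (d x x₀) ≤ Psi Φ φ (d x (T x)) := by
  intro x
  set s := d x x₀ with hs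
  have hs0 : 0 ≤ s := hpos x x₀
  obtain ⟨hΦsymm, hΦmono, -, hΦtri⟩ := hΦ
  have h1 : ENNReal.ofReal s ≤ Φ (d x (T x)) (d (T x) x₀) := hΦtri x x₀ (T x)
  have h2 : d (T x) x₀ ≤ φ s := by
    have := hT x x₀
    rwa [hfix] at this
  have h3 : Φ (d x (T x)) (d (T x) x₀) ≤ Φ (d x (T x)) (φ s) := by
    rw [hΦsymm (d x (T x)), hΦsymm (d x (T x))]
    exact hΦmono _ _ _ (hpos _ _) h2 (hpos _ _)
  exact le_sSup ⟨s, hs0, h1.trans h3, rfl⟩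
end

section
/- Let T be a φ-contraction on a complete regular semimetric space with triangle function Φ, x₀ its unique fixed point, and (x_k) the Picard iteration x₁ := x, x_{k+1} := T(x_k). Then for all k and all ℓ ∈ {1,…,k}, d(x_k, x₀) ≤ ψ(φ^{k−ℓ}(d(x_ℓ, x_{ℓ+1}))), and moreover d(x_k, x₀) ≤ φ(d(x_{k−1}, x₀)), where ψ(t) := sup{ s ≥ 0 : s ≤ Φ(t, φ(s)) }. -/
open Set Filter Topology ENNReal

open Semimetric
/-- a priori/a posteriori error estimates and convergence speed
for the Picard iteration. -/
theorem statement17 {X : Type*} (d : X → X → ℝ)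
    (hpos : ∀ x y, 0 ≤ d x y) (hsymm : ∀ x y, d x y = d y x)
    (hzero : ∀ x y, d x y = 0 ↔ x = y)
    (hcomplete : IsCompleteS d)
    (Φ : ℝ → ℝ → ℝ≥0∞) (hΦ : IsTriangleFun d Φ) (hreg : RegularAt00 Φ)
    (φ : ℝ → ℝ) (hφ : IsComparison φ)
    (T : X → X) (hT : IsContraction d φ T)
    (x₀ : X) (hfix : T x₀ = x₀)
    (x : ℕ → X) (hiter : ∀ k, x (k + 1) = T (x k)) :
    (∀ k ℓ : ℕ, ℓ ≤ k →
        ENNReal.ofReal (d (x k) x₀) ≤ Psi Φ φ (φ^[k - ℓ] (d (x ℓ) (x (ℓ + 1))))) ∧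
    (∀ k : ℕ, d (x (k + 1)) x₀ ≤ φ (d (x k) x₀)) := by
  obtain ⟨hφ0, hφmono, _⟩ := hφ
  obtain ⟨hΦsymm, hΦmono, _, hΦtri⟩ := hΦ
  have hpost : ∀ k : ℕ, d (x (k + 1)) x₀ ≤ φ (d (x k) x₀) := by
    intro k
    conv_lhs => rw [hiter k, ← hfix]
    exact hT _ _
  have hiternn : ∀ n t, 0 ≤ t → 0 ≤ φ^[n] t := by
    intro n
    induction n with
    | zero => intro t ht; simpa using ht
    | succ n ih =>
      intro t ht
      rw [Function.iterate_succ_apply']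
      exact hφ0 _ (ih t ht)
  have hstep : ∀ m ℓ : ℕ, d (x (ℓ + m)) (x (ℓ + m + 1)) ≤ φ^[m] (d (x ℓ) (x (ℓ + 1))) := by
    intro m
    induction m with
    | zero => intro ℓ; simp
    | succ m ih =>
      intro ℓ
      have h1 : d (x (ℓ + m + 1)) (x (ℓ + m + 2)) ≤ φ (d (x (ℓ + m)) (x (ℓ + m + 1))) := by
        have h := hT (x (ℓ + m)) (x (ℓ + m + 1))
        rw [← hiter (ℓ + m), ← hiter (ℓ + m + 1)] at h
        exact h
      calc d (x (ℓ + (m+1))) (x (ℓ + (m+1) + 1)) = d (x (ℓ + m + 1)) (x (ℓ + m + 2)) := by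
            ring_nf
        _ ≤ φ (d (x (ℓ + m)) (x (ℓ + m + 1))) := h1
        _ ≤ φ (φ^[m] (d (x ℓ) (x (ℓ + 1)))) := hφmono _ _ (hpos _ _) (ih ℓ)
        _ = φ^[m+1] (d (x ℓ) (x (ℓ + 1))) := (Function.iterate_succ_apply' φ m _).symm
  refine ⟨?_, hpost⟩
  intro k ℓ hℓ
  set t := φ^[k - ℓ] (d (x ℓ) (x (ℓ + 1))) with ht
  set s := d (x k) x₀ with hs
  have hkeq : ℓ + (k - ℓ) = k := Nat.add_sub_cancel' hℓ
  have hdt : d (x k) (x (k + 1)) ≤ t := by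
    have := hstep (k - ℓ) ℓ
    rwa [hkeq] at this
  have htnn : 0 ≤ t := hiternn _ _ (hpos _ _)
  have hmem : ENNReal.ofReal s ≤ Φ t (φ s) := by
    calc ENNReal.ofReal s ≤ Φ (d (x k) (x (k+1))) (d (x (k+1)) x₀) := hΦtri _ _ _
      _ = Φ (d (x (k+1)) x₀) (d (x k) (x (k+1))) := hΦsymm _ _
      _ ≤ Φ (φ s) (d (x k) (x (k+1))) := hΦmono _ _ _ (hpos _ _) (hpost k) (hpos _ _)
      _ = Φ (d (x k) (x (k+1))) (φ s) := hΦsymm _ _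
      _ = Φ (φ s) (d (x k) (x (k+1))) := hΦsymm _ _
      _ ≤ Φ (φ s) t := by
          rw [hΦsymm (φ s) _, hΦsymm (φ s) t]
          exact hΦmono _ _ _ (hpos _ _) hdt (hφ0 _ (hpos _ _))
      _ = Φ t (φ s) := hΦsymm _ _
  exact le_sSup ⟨s, hpos _ _, hmem, rfl⟩
end

section
/- Let (X,d) be a complete regular semimetric space with a real-valued upper semicontinuous triangle function and φ an upper semicontinuous comparison function. For each j ∈ {1,…,n}, let (T_{k,j})_k be a sequence of φ-contractions converging pointwise to a φ-contraction T_{0,j}. Let H_k denote the unique compact fractal of the system (T_{k,1},…,T_{k,n}) for each k ≥ 0. Then D(H_k, H_0) → 0 as k → ∞ (stability of fractals). -/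
open Set Filter Topology ENNReal

open Semimetric
namespace S19

variable {X : Type*}

/-- Word application for an iterated function system. -/
def applyW {n : ℕ} (S : Fin n → X → X) : List (Fin n) → X → X
  | [], x => x
  | j :: l, x => S j (applyW S l x)

@[simp] lemma applyW_nil {n : ℕ} (S : Fin n → X → X) (x : X) : applyW S [] x = x := rfl

@[simp] lemma applyW_cons {n : ℕ} (S : Fin n → X → X) (j : Fin n) (l : List (Fin n)) (x : X) :
    applyW S (j :: l) x = S j (applyW S l x) := rfl

lemma applyW_append {n : ℕ} (S : Fin n → X → X) (l₁ l₂ : List (Fin n)) (x : X) :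
    applyW S (l₁ ++ l₂) x = applyW S l₁ (applyW S l₂ x) := by
  induction l₁ with
  | nil => rfl
  | cons j l ih => simp [ih]

lemma phi_lt {φ : ℝ → ℝ} (hφ : IsComparison φ) {t : ℝ} (ht : 0 < t) : φ t < t := by
  by_contra h
  push_neg at h
  have hiter : ∀ m, t ≤ φ^[m] t := by
    intro m; induction m with
    | zero => simp
    | succ m ih =>
      rw [Function.iterate_succ_apply']
      exact le_trans h (hφ.2.1 t _ ht.le ih)
  obtain ⟨m, hm⟩ := ((hφ.2.2 t ht).eventually_lt_const ht).exists
  exact absurd hm (not_lt.mpr (hiter m))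

lemma phi_zero {φ : ℝ → ℝ} (hφ : IsComparison φ) : φ 0 = 0 := by
  have h0 : 0 ≤ φ 0 := hφ.1 0 le_rfl
  rcases eq_or_lt_of_le h0 with h | h
  · exact h.symm
  · exfalso
    have h1 : φ 0 ≤ φ (φ 0 / 2) := hφ.2.1 0 _ le_rfl (by linarith)
    have h2 : φ (φ 0 / 2) < φ 0 / 2 := phi_lt hφ (by linarith)
    linarith

lemma phi_le {φ : ℝ → ℝ} (hφ : IsComparison φ) {t : ℝ} (ht : 0 ≤ t) : φ t ≤ t := by
  rcases eq_or_lt_of_le ht with h | h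
  · rw [← h, phi_zero hφ]
  · exact (phi_lt hφ h).le

lemma iter_nonneg {φ : ℝ → ℝ} (hφ : IsComparison φ) (r : ℕ) {t : ℝ} (ht : 0 ≤ t) :
    0 ≤ φ^[r] t := by
  induction r with
  | zero => simpa
  | succ r ih => rw [Function.iterate_succ_apply']; exact hφ.1 _ ih

lemma iter_mono {φ : ℝ → ℝ} (hφ : IsComparison φ) (r : ℕ) {s t : ℝ} (hs : 0 ≤ s)
    (hst : s ≤ t) : φ^[r] s ≤ φ^[r] t := by
  induction r with
  | zero => simpa
  | succ r ih =>
    rw [Function.iterate_succ_apply', Function.iterate_succ_apply']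
    exact hφ.2.1 _ _ (iter_nonneg hφ r hs) ih

lemma reg {d : X → X → ℝ} {Φ : ℝ → ℝ → ℝ} (hΦ : IsTriangleFunR d Φ)
    (husc : UpperSemicontinuousOn (fun p : ℝ × ℝ => Φ p.1 p.2) (Set.Ici 0 ×ˢ Set.Ici 0)) :
    ∀ c > (0:ℝ), ∃ δ > (0:ℝ), ∀ u v : ℝ, 0 ≤ u → u ≤ δ → 0 ≤ v → v ≤ δ → Φ u v < c := by
  intro c hc
  have h00 : ((0,0) : ℝ × ℝ) ∈ Set.Ici (0:ℝ) ×ˢ Set.Ici (0:ℝ) := by simp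
  have h := husc (0,0) h00 c (by simpa [hΦ.2.2.2.1] using hc)
  rw [Filter.eventually_iff, Metric.mem_nhdsWithin_iff] at h
  obtain ⟨ε, hε, hsub⟩ := h
  refine ⟨ε/2, by linarith, fun u v hu huδ hv hvδ => ?_⟩
  have hm : ((u,v) : ℝ × ℝ) ∈ Metric.ball ((0,0) : ℝ × ℝ) ε ∩ (Set.Ici (0:ℝ) ×ˢ Set.Ici (0:ℝ)) := by
    constructor
    · rw [Metric.mem_ball, Prod.dist_eq]
      apply max_lt
      · rw [Real.dist_eq, sub_zero, abs_of_nonneg hu]; linarith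
      · rw [Real.dist_eq, sub_zero, abs_of_nonneg hv]; linarith
    · simp only [Set.mem_prod, Set.mem_Ici]; exact ⟨hu, hv⟩
  exact hsub hm

lemma O_open {d : X → X → ℝ} {Φ : ℝ → ℝ → ℝ} (hpos : ∀ x y, 0 ≤ d x y)
    (hΦ : IsTriangleFunR d Φ)
    (husc : UpperSemicontinuousOn (fun p : ℝ × ℝ => Φ p.1 p.2) (Set.Ici 0 ×ˢ Set.Ici 0))
    (p : X) (ε : ℝ) :
    IsOpenS d {x | ∃ r > (0:ℝ), Ball d x r ⊆ Ball d p ε} := by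
  rintro x ⟨r, hr, hsub⟩
  obtain ⟨s, hs, hΦs⟩ := reg hΦ husc r hr
  refine ⟨s, hs, fun y hy => ?_⟩
  refine ⟨s, hs, fun z hz => ?_⟩
  apply hsub
  show d z x < r
  calc d z x ≤ Φ (d z y) (d y x) := hΦ.2.2.2.2 z x y
    _ < r := hΦs _ _ (hpos _ _) (le_of_lt hz) (hpos _ _) (le_of_lt hy)

lemma bounded_of_compact {d : X → X → ℝ} {Φ : ℝ → ℝ → ℝ} (hpos : ∀ x y, 0 ≤ d x y)
    (hzero : ∀ x y, d x y = 0 ↔ x = y) (hΦ : IsTriangleFunR d Φ)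
    (husc : UpperSemicontinuousOn (fun p : ℝ × ℝ => Φ p.1 p.2) (Set.Ici 0 ×ˢ Set.Ici 0))
    {A : Set X} (hA : IsCompactS d A) (y₀ : X) : ∃ M : ℝ, ∀ z ∈ A, d z y₀ ≤ M := by
  classical
  rcases A.eq_empty_or_nonempty with hAe | ⟨x₀, hx₀⟩
  · exact ⟨0, by simp [hAe]⟩
  set O : X → Set X := fun p => {x | ∃ r > (0:ℝ), Ball d x r ⊆ Ball d p 1} with hO
  obtain ⟨F, hFsub, hFfin, hcov⟩ := hA (O '' A)
    (by rintro U ⟨p, _, rfl⟩; exact O_open hpos hΦ husc p 1)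
    (fun x hx => Set.mem_sUnion.mpr ⟨O x, Set.mem_image_of_mem O hx, ⟨1, one_pos, subset_rfl⟩⟩)
  have hch : ∀ U : Set X, ∃ p : X, U ∈ F → U = O p := by
    intro U
    by_cases hU : U ∈ F
    · obtain ⟨p, _, hpU⟩ := hFsub hU
      exact ⟨p, fun _ => hpU.symm⟩
    · exact ⟨x₀, fun h => absurd h hU⟩
  choose pf hpf using hch
  refine ⟨sSup ((fun U => Φ 1 (d (pf U) y₀)) '' F), fun z hz => ?_⟩
  obtain ⟨U, hUF, hzU⟩ := Set.mem_sUnion.mp (hcov hz)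
  have hzO : z ∈ O (pf U) := (hpf U hUF) ▸ hzU
  obtain ⟨r, hr, hsub⟩ := hzO
  have hz1 : d z (pf U) < 1 := hsub (show d z z < r by rw [(hzero z z).mpr rfl]; exact hr)
  have h1 : d z y₀ ≤ Φ (d z (pf U)) (d (pf U) y₀) := hΦ.2.2.2.2 _ _ _
  have h2 : Φ (d z (pf U)) (d (pf U) y₀) ≤ Φ 1 (d (pf U) y₀) :=
    hΦ.2.1 _ _ _ (hpos _ _) hz1.le (hpos _ _)
  exact le_trans (le_trans h1 h2) (le_csSup ((hFfin.image _).bddAbove) ⟨U, hUF, rfl⟩)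

lemma contract_iter {d : X → X → ℝ} (hpos : ∀ x y, 0 ≤ d x y) {φ : ℝ → ℝ}
    (hφ : IsComparison φ) {n : ℕ} {S : Fin n → X → X}
    (hS : ∀ j, IsContraction d φ (S j)) (l : List (Fin n)) (x y : X) :
    d (applyW S l x) (applyW S l y) ≤ φ^[l.length] (d x y) := by
  induction l with
  | nil => simp
  | cons j l ih =>
    rw [List.length_cons, Function.iterate_succ_apply']
    calc d (applyW S (j::l) x) (applyW S (j::l) y)
        ≤ φ (d (applyW S l x) (applyW S l y)) := hS j _ _
      _ ≤ φ (φ^[l.length] (d x y)) := hφ.2.1 _ _ (hpos _ _) ih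

lemma mem_applyW {n : ℕ} {S : Fin n → X → X} {A : Set X} (hA : A = ⋃ j, S j '' A)
    (l : List (Fin n)) {x : X} (hx : x ∈ A) : applyW S l x ∈ A := by
  induction l with
  | nil => exact hx
  | cons j l ih =>
    show S j (applyW S l x) ∈ A
    rw [hA]
    exact Set.mem_iUnion.mpr ⟨j, Set.mem_image_of_mem _ ih⟩

lemma unravel {n : ℕ} {S : Fin n → X → X} {A : Set X} (hA : A = ⋃ j, S j '' A) :
    ∀ r : ℕ, ∀ a ∈ A, ∃ (l : List (Fin n)) (x : X), l.length = r ∧ x ∈ A ∧ a = applyW S l x := by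
  intro r
  induction r with
  | zero => exact fun a ha => ⟨[], a, rfl, ha, rfl⟩
  | succ r ih =>
    intro a ha
    have ha' : a ∈ ⋃ j, S j '' A := hA ▸ ha
    simp only [Set.mem_iUnion, Set.mem_image] at ha'
    obtain ⟨j, x', hx', heq⟩ := ha'
    obtain ⟨l, x, hlen, hx, hrep⟩ := ih x' hx'
    exact ⟨j :: l, x, by simp [hlen], hx, by rw [← heq, hrep]; rfl⟩

open Filter in
lemma eventually_good {d : X → X → ℝ} (hpos : ∀ x y, 0 ≤ d x y)
    (hsymm : ∀ x y, d x y = d y x) (hzero : ∀ x y, d x y = 0 ↔ x = y)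
    {Φ : ℝ → ℝ → ℝ} (hΦ : IsTriangleFunR d Φ)
    (husc : UpperSemicontinuousOn (fun p : ℝ × ℝ => Φ p.1 p.2) (Set.Ici 0 ×ˢ Set.Ici 0))
    {φ : ℝ → ℝ} (hφ : IsComparison φ) {n : ℕ} {T : ℕ → Fin n → X → X} {T₀ : Fin n → X → X}
    (hT : ∀ k j, IsContraction d φ (T k j)) (hT₀ : ∀ j, IsContraction d φ (T₀ j))
    (hconv : ∀ j x, Tendsto (fun k => d (T k j x) (T₀ j x)) atTop (nhds 0))
    {H₀ : Set X} (hcomp : IsCompactS d H₀) :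
    ∀ η > (0:ℝ), ∀ᶠ k in atTop, ∀ j, ∀ x ∈ H₀, d (T k j x) (T₀ j x) ≤ η := by
  classical
  intro η hη
  obtain ⟨δ₁, hδ₁pos, hΦ₁⟩ := reg hΦ husc η hη
  obtain ⟨δ₂', hδ₂'pos, hΦ₂⟩ := reg hΦ husc δ₁ hδ₁pos
  set δ₂ := min δ₂' δ₁ with hδ₂def
  have hδ₂pos : 0 < δ₂ := lt_min hδ₂'pos hδ₁pos
  have hδ₂le : δ₂ ≤ δ₁ := min_le_right _ _
  have hΦ₂' : ∀ u v, 0 ≤ u → u ≤ δ₂ → 0 ≤ v → v ≤ δ₂ → Φ u v < δ₁ := fun u v hu huδ hv hvδ =>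
    hΦ₂ u v hu (le_trans huδ (min_le_left _ _)) hv (le_trans hvδ (min_le_left _ _))
  rcases H₀.eq_empty_or_nonempty with hE | ⟨x₀, hx₀⟩
  · exact Filter.Eventually.of_forall (fun k j x hx => absurd hx (by simp [hE]))
  set O : X → Set X := fun p => {x | ∃ r > (0:ℝ), Ball d x r ⊆ Ball d p δ₂} with hO
  obtain ⟨F, hFsub, hFfin, hcov⟩ := hcomp (O '' H₀)
    (by rintro U ⟨p, _, rfl⟩; exact O_open hpos hΦ husc p δ₂)
    (fun x hx => Set.mem_sUnion.mpr ⟨O x, Set.mem_image_of_mem O hx, ⟨δ₂, hδ₂pos, subset_rfl⟩⟩)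
  have hch : ∀ U : Set X, ∃ p : X, U ∈ F → (p ∈ H₀ ∧ U = O p) := by
    intro U
    by_cases hU : U ∈ F
    · obtain ⟨p, hpH, hpU⟩ := hFsub hU
      exact ⟨p, fun _ => ⟨hpH, hpU.symm⟩⟩
    · exact ⟨x₀, fun h => absurd h hU⟩
  choose pf hpf using hch
  have hev : ∀ᶠ k in atTop, ∀ U ∈ F, ∀ j : Fin n, d (T k j (pf U)) (T₀ j (pf U)) < δ₂ := by
    rw [eventually_all_finite hFfin]
    intro U hU
    rw [eventually_all]
    intro j
    exact (hconv j (pf U)).eventually_lt_const hδ₂pos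
  refine hev.mono (fun k hk j x hx => ?_)
  obtain ⟨U, hUF, hxU⟩ := Set.mem_sUnion.mp (hcov hx)
  obtain ⟨hpH, hUO⟩ := hpf U hUF
  have hxO : x ∈ O (pf U) := hUO ▸ hxU
  obtain ⟨r, hr, hsub⟩ := hxO
  have hxp : d x (pf U) < δ₂ :=
    hsub (show d x x < r by rw [(hzero x x).mpr rfl]; exact hr)
  have hdisc := hk U hUF j
  have hTpx : d (T₀ j (pf U)) (T₀ j x) ≤ δ₂ := by
    refine le_trans (hT₀ j (pf U) x) (le_trans (phi_le hφ (hpos _ _)) ?_)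
    rw [hsymm]; exact hxp.le
  have hinner : d (T k j (pf U)) (T₀ j x) < δ₁ := by
    calc d (T k j (pf U)) (T₀ j x)
        ≤ Φ (d (T k j (pf U)) (T₀ j (pf U))) (d (T₀ j (pf U)) (T₀ j x)) := hΦ.2.2.2.2 _ _ _
      _ < δ₁ := hΦ₂' _ _ (hpos _ _) hdisc.le (hpos _ _) hTpx
  have hfirst : d (T k j x) (T k j (pf U)) ≤ δ₁ :=
    le_trans (hT k j x (pf U)) (le_trans (phi_le hφ (hpos _ _)) (le_trans hxp.le hδ₂le))
  calc d (T k j x) (T₀ j x)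
      ≤ Φ (d (T k j x) (T k j (pf U))) (d (T k j (pf U)) (T₀ j x)) := hΦ.2.2.2.2 _ _ _
    _ ≤ η := (hΦ₁ _ _ (hpos _ _) hfirst (hpos _ _) hinner.le).le

lemma wshort {d : X → X → ℝ} (hpos : ∀ x y, 0 ≤ d x y) (hsymm : ∀ x y, d x y = d y x)
    (hzero : ∀ x y, d x y = 0 ↔ x = y)
    {Φ : ℝ → ℝ → ℝ} (hΦ : IsTriangleFunR d Φ)
    (husc : UpperSemicontinuousOn (fun p : ℝ × ℝ => Φ p.1 p.2) (Set.Ici 0 ×ˢ Set.Ici 0))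
    {φ : ℝ → ℝ} (hφ : IsComparison φ) {n : ℕ} {T₀ : Fin n → X → X}
    {H₀ : Set X} (hH₀ : H₀ = ⋃ j, T₀ j '' H₀) :
    ∀ (m : ℕ) (c : ℝ), 0 < c → ∃ δ > (0:ℝ), δ ≤ c ∧
      ∀ (Tk : Fin n → X → X), (∀ j, IsContraction d φ (Tk j)) →
        (∀ j, ∀ x ∈ H₀, d (Tk j x) (T₀ j x) ≤ δ) →
        ∀ l : List (Fin n), l.length ≤ m → ∀ s ∈ H₀,
          d (applyW T₀ l s) (applyW Tk l s) ≤ c := by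
  intro m
  induction m with
  | zero =>
    intro c hc
    refine ⟨c, hc, le_rfl, fun Tk hTk hgood l hl s hs => ?_⟩
    rw [List.eq_nil_of_length_eq_zero (Nat.le_zero.mp hl)]
    simp only [applyW_nil]
    rw [(hzero s s).mpr rfl]
    exact hc.le
  | succ m ih =>
    intro c hc
    obtain ⟨δ₀', hδ₀'pos, hcreg⟩ := reg hΦ husc c hc
    set δ₀ := min δ₀' c with hδ₀def
    have hδ₀pos : 0 < δ₀ := lt_min hδ₀'pos hc
    have hδ₀le' : δ₀ ≤ δ₀' := min_le_left _ _
    obtain ⟨δ₁, hδ₁pos, hδ₁le, hIH⟩ := ih δ₀ hδ₀pos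
    refine ⟨δ₁, hδ₁pos, le_trans hδ₁le (min_le_right _ _), fun Tk hTk hgood l hl s hs => ?_⟩
    match l with
    | [] =>
      simp only [applyW_nil]
      rw [(hzero s s).mpr rfl]
      exact hc.le
    | j :: l' =>
      have hl' : l'.length ≤ m := by simpa using Nat.succ_le_succ_iff.mp (by simpa using hl)
      have hu : applyW T₀ l' s ∈ H₀ := mem_applyW hH₀ l' hs
      have h1 : d (T₀ j (applyW T₀ l' s)) (Tk j (applyW T₀ l' s)) ≤ δ₁ := by
        rw [hsymm]; exact hgood j _ hu
      have h2 : d (Tk j (applyW T₀ l' s)) (Tk j (applyW Tk l' s)) ≤ δ₀ := by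
        refine le_trans (hTk j _ _) (le_trans (phi_le hφ (hpos _ _)) ?_)
        exact hIH Tk hTk hgood l' hl' s hs
      simp only [applyW_cons]
      calc d (T₀ j (applyW T₀ l' s)) (Tk j (applyW Tk l' s))
          ≤ Φ (d (T₀ j (applyW T₀ l' s)) (Tk j (applyW T₀ l' s)))
              (d (Tk j (applyW T₀ l' s)) (Tk j (applyW Tk l' s))) := hΦ.2.2.2.2 _ _ _
        _ ≤ c := (hcreg _ _ (hpos _ _) (le_trans h1 (le_trans hδ₁le hδ₀le'))
              (hpos _ _) (le_trans h2 hδ₀le')).le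

open Filter in
lemma wordbound {d : X → X → ℝ} (hpos : ∀ x y, 0 ≤ d x y) (hsymm : ∀ x y, d x y = d y x)
    (hzero : ∀ x y, d x y = 0 ↔ x = y)
    {Φ : ℝ → ℝ → ℝ} (hΦ : IsTriangleFunR d Φ)
    (husc : UpperSemicontinuousOn (fun p : ℝ × ℝ => Φ p.1 p.2) (Set.Ici 0 ×ˢ Set.Ici 0))
    {φ : ℝ → ℝ} (hφ : IsComparison φ) {n : ℕ} {T₀ : Fin n → X → X}
    {H₀ : Set X} (hH₀ : H₀ = ⋃ j, T₀ j '' H₀) :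
    ∀ ρ > (0:ℝ), ∃ η > (0:ℝ),
      ∀ (Tk : Fin n → X → X), (∀ j, IsContraction d φ (Tk j)) →
        (∀ j, ∀ x ∈ H₀, d (Tk j x) (T₀ j x) ≤ η) →
        ∀ l : List (Fin n), ∀ s ∈ H₀, d (applyW T₀ l s) (applyW Tk l s) ≤ ρ := by
  intro ρ hρ
  obtain ⟨δ₀', hδ₀'pos, hreg0⟩ := reg hΦ husc ρ hρ
  set δ₀ := min δ₀' ρ with hδ₀def
  have hδ₀pos : 0 < δ₀ := lt_min hδ₀'pos hρ
  have hδ₀le' : δ₀ ≤ δ₀' := min_le_left _ _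
  have hδ₀leρ : δ₀ ≤ ρ := min_le_right _ _
  obtain ⟨m₀, hm₀ge, hm₀⟩ : ∃ m₀, 1 ≤ m₀ ∧ φ^[m₀] ρ ≤ δ₀ := by
    obtain ⟨m, h1, h2⟩ :=
      (((hφ.2.2 ρ hρ).eventually_lt_const hδ₀pos).and (eventually_ge_atTop 1)).exists
    exact ⟨m, h2, h1.le⟩
  obtain ⟨η, hηpos, hηle, hshort⟩ := wshort hpos hsymm hzero hΦ husc hφ hH₀ m₀ δ₀ hδ₀pos
  refine ⟨η, hηpos, fun Tk hTk hgood => ?_⟩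
  have hsh := hshort Tk hTk hgood
  have main : ∀ r : ℕ, ∀ l : List (Fin n), l.length ≤ r → ∀ s ∈ H₀,
      d (applyW T₀ l s) (applyW Tk l s) ≤ ρ := by
    intro r
    induction r with
    | zero =>
      intro l hl s hs
      exact le_trans (hsh l (hl.trans (Nat.zero_le m₀)) s hs) hδ₀leρ
    | succ r ih =>
      intro l hl s hs
      by_cases hlm : l.length ≤ m₀
      · exact le_trans (hsh l hlm s hs) hδ₀leρ
      · push_neg at hlm
        set l₁ := l.take m₀ with hl₁def
        set l₂ := l.drop m₀ with hl₂def
        have hl₁ : l₁.length = m₀ := by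
          rw [hl₁def, List.length_take]; exact min_eq_left hlm.le
        have hl₂ : l₂.length ≤ r := by
          rw [hl₂def, List.length_drop]; omega
        have hl12 : l₁ ++ l₂ = l := List.take_append_drop _ _
        have hs' : applyW T₀ l₂ s ∈ H₀ := mem_applyW hH₀ _ hs
        have hA : d (applyW T₀ l₁ (applyW T₀ l₂ s)) (applyW Tk l₁ (applyW T₀ l₂ s)) ≤ δ₀ :=
          hsh l₁ (le_of_eq hl₁) _ hs'
        have hB : d (applyW Tk l₁ (applyW T₀ l₂ s)) (applyW Tk l₁ (applyW Tk l₂ s))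
            ≤ φ^[m₀] ρ := by
          have hci := contract_iter hpos hφ hTk l₁ (applyW T₀ l₂ s) (applyW Tk l₂ s)
          rw [hl₁] at hci
          exact le_trans hci (iter_mono hφ m₀ (hpos _ _) (ih l₂ hl₂ s hs))
        have e0 : applyW T₀ l s = applyW T₀ l₁ (applyW T₀ l₂ s) := by
          rw [← hl12, applyW_append]
        have e1 : applyW Tk l s = applyW Tk l₁ (applyW Tk l₂ s) := by
          rw [← hl12, applyW_append]
        rw [e0, e1]
        refine le_of_lt (lt_of_le_of_lt (hΦ.2.2.2.2 _ _ (applyW Tk l₁ (applyW T₀ l₂ s))) ?_)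
        exact hreg0 _ _ (hpos _ _) (hA.trans hδ₀le') (hpos _ _)
          (le_trans hB (le_trans hm₀ hδ₀le'))
  exact fun l s hs => main l.length l le_rfl s hs

end S19

open S19 in
/-- stability of fractals with respect to pointwise
convergence of the contractions. -/
theorem statement19 {X : Type*} (d : X → X → ℝ)
    (hpos : ∀ x y, 0 ≤ d x y) (hsymm : ∀ x y, d x y = d y x)
    (hzero : ∀ x y, d x y = 0 ↔ x = y)
    (hcomplete : IsCompleteS d)
    (Φ : ℝ → ℝ → ℝ) (hΦ : IsTriangleFunR d Φ)
    (husc : UpperSemicontinuousOn (fun p : ℝ × ℝ => Φ p.1 p.2) (Set.Ici 0 ×ˢ Set.Ici 0))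
    (φ : ℝ → ℝ) (hφ : IsComparison φ)
    (hφusc : UpperSemicontinuousOn φ (Set.Ici 0))
    (n : ℕ) (hn : 0 < n)
    (T : ℕ → Fin n → X → X) (T₀ : Fin n → X → X)
    (hT : ∀ k j, IsContraction d φ (T k j)) (hT₀ : ∀ j, IsContraction d φ (T₀ j))
    (hconv : ∀ j x, Tendsto (fun k => d (T k j x) (T₀ j x)) atTop (nhds 0))
    (H : ℕ → Set X) (H₀ : Set X)
    (hH : ∀ k, (H k).Nonempty ∧ IsCompactS d (H k) ∧ H k = ⋃ j, T k j '' H k)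
    (hH₀ : H₀.Nonempty ∧ IsCompactS d H₀ ∧ H₀ = ⋃ j, T₀ j '' H₀) :
    Tendsto (fun k => HD d (H k) H₀) atTop (nhds 0) := by
  classical
  rw [ENNReal.tendsto_nhds_zero]
  intro ε hε
  obtain ⟨εr, hεr, hεle⟩ : ∃ r : ℝ, 0 < r ∧ ENNReal.ofReal r ≤ ε := by
    rcases eq_or_ne ε ⊤ with rfl | hne
    · exact ⟨1, one_pos, le_top⟩
    · exact ⟨ε.toReal, ENNReal.toReal_pos (ne_of_gt hε) hne,
        le_of_eq (ENNReal.ofReal_toReal hne)⟩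
  obtain ⟨δ₁, hδ₁pos, hreg1⟩ := S19.reg hΦ husc εr hεr
  obtain ⟨η, hηpos, hword⟩ := S19.wordbound hpos hsymm hzero hΦ husc hφ hH₀.2.2 δ₁ hδ₁pos
  have hgoodev := S19.eventually_good hpos hsymm hzero hΦ husc hφ hT hT₀ hconv hH₀.2.1 η hηpos
  refine hgoodev.mono (fun k hgood => ?_)
  obtain ⟨y0, hy0⟩ := hH₀.1
  obtain ⟨yk, hyk⟩ := (hH k).1
  obtain ⟨M₁, hM₁⟩ := S19.bounded_of_compact hpos hzero hΦ husc (hH k).2.1 y0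
  obtain ⟨M₂, hM₂⟩ := S19.bounded_of_compact hpos hzero hΦ husc hH₀.2.1 yk
  set C := max (max M₁ M₂) 1 with hC
  have hCpos : (0:ℝ) < C := lt_of_lt_of_le one_pos (le_max_right _ _)
  obtain ⟨r, hr⟩ := ((hφ.2.2 C hCpos).eventually_lt_const hδ₁pos).exists
  have side1 : ∀ a ∈ H k, ∃ b ∈ H₀, d a b < εr := by
    intro a ha
    obtain ⟨l, x, hlen, hx, rfl⟩ := S19.unravel (hH k).2.2 r a ha
    refine ⟨applyW T₀ l y0, S19.mem_applyW hH₀.2.2 l hy0, ?_⟩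
    have h1 : d (applyW (T k) l x) (applyW (T k) l y0) ≤ δ₁ := by
      have hci := S19.contract_iter hpos hφ (hT k) l x y0
      rw [hlen] at hci
      refine le_trans hci (le_trans (S19.iter_mono hφ r (hpos _ _) ?_) hr.le)
      exact le_trans (hM₁ x hx) (le_trans (le_max_left _ _) (le_max_left _ _))
    have h2 : d (applyW (T k) l y0) (applyW T₀ l y0) ≤ δ₁ := by
      rw [hsymm]
      exact hword (T k) (hT k) hgood l y0 hy0
    calc d (applyW (T k) l x) (applyW T₀ l y0)
        ≤ Φ (d (applyW (T k) l x) (applyW (T k) l y0))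
            (d (applyW (T k) l y0) (applyW T₀ l y0)) := hΦ.2.2.2.2 _ _ _
      _ < εr := hreg1 _ _ (hpos _ _) h1 (hpos _ _) h2
  have side2 : ∀ b ∈ H₀, ∃ a ∈ H k, d b a < εr := by
    intro b hb
    obtain ⟨l, y, hlen, hy, rfl⟩ := S19.unravel hH₀.2.2 r b hb
    refine ⟨applyW (T k) l yk, S19.mem_applyW (hH k).2.2 l hyk, ?_⟩
    have h1 : d (applyW T₀ l y) (applyW (T k) l y) ≤ δ₁ :=
      hword (T k) (hT k) hgood l y hy
    have h2 : d (applyW (T k) l y) (applyW (T k) l yk) ≤ δ₁ := by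
      have hci := S19.contract_iter hpos hφ (hT k) l y yk
      rw [hlen] at hci
      refine le_trans hci (le_trans (S19.iter_mono hφ r (hpos _ _) ?_) hr.le)
      exact le_trans (hM₂ y hy) (le_trans (le_max_right _ _) (le_max_left _ _))
    calc d (applyW T₀ l y) (applyW (T k) l yk)
        ≤ Φ (d (applyW T₀ l y) (applyW (T k) l y))
            (d (applyW (T k) l y) (applyW (T k) l yk)) := hΦ.2.2.2.2 _ _ _
      _ < εr := hreg1 _ _ (hpos _ _) h1 (hpos _ _) h2
  rw [show HD d (H k) H₀ = _ from rfl]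
  refine le_trans (sInf_le ?_) hεle
  refine ⟨ENNReal.ofReal_pos.mpr hεr, ?_, ?_⟩
  · intro a ha
    obtain ⟨b, hb, hab⟩ := side1 a ha
    exact ⟨b, hb, (ENNReal.ofReal_lt_ofReal_iff hεr).mpr hab⟩
  · intro b hb
    obtain ⟨a, ha, hba⟩ := side2 b hb
    exact ⟨a, ha, (ENNReal.ofReal_lt_ofReal_iff hεr).mpr hba⟩
end
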